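/- arXiv:2408.15804 — 6 statements merged into one kernel-verified Lean document; each statement's English description precedes it below -/
import Mathlib

section
/- Let q be a symmetric bilinear form on a finite-dimensional real vector space V, let H, D, D' ∈ V with q(H,H) > 0 and q(D,H) > 0, and suppose q is negative semidefinite on the hyperplane P_H = {v : q(H,v) = 0}. If q(D,D') = 0 and q(D,D) ≥ 0, then q(D',D') ≤ 0. Moreover, if in addition q(D',D') = 0, then for c = -q(H,D')/q(D,H) one has q(D' + cD, w) = 0 for all w ∈ V. -/
/-- Abstract Hodge-index-type lemma: if `q(H,H) > 0`, `q(D,H) > 0`, `q` is negative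
semidefinite on `P_H = {v : q(H,v) = 0}`, `q(D,D') = 0` and `q(D,D) ≥ 0`, then
`q(D',D') ≤ 0`; and if moreover `q(D',D') = 0`, then with `c = -q(H,D')/q(D,H)`
the vector `D' + c•D` is `q`-orthogonal to all of `V`. -/
theorem hodge_index_type_lemma (V : Type*) [AddCommGroup V] [Module ℝ V]
    [FiniteDimensional ℝ V]
    (q : V →ₗ[ℝ] V →ₗ[ℝ] ℝ) (hsymm : ∀ x y : V, q x y = q y x)
    (H D D' : V) (hH : 0 < q H H) (hDH : 0 < q D H)
    (hneg : ∀ v : V, q H v = 0 → q v v ≤ 0)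
    (hDD' : q D D' = 0) (hDD : 0 ≤ q D D) :
    q D' D' ≤ 0 ∧
      (q D' D' = 0 →
        ∀ w : V, q (D' + (-(q H D') / q D H) • D) w = 0) := by
  set c : ℝ := -(q H D') / q D H with hc
  set E : V := D' + c • D with hE
  have hD'D : q D' D = 0 := by rw [hsymm]; exact hDD'
  have hHD : q H D = q D H := hsymm H D
  have hHE : q H E = 0 := by
    simp only [hE, map_add, map_smul, smul_eq_mul, hc, hHD]
    field_simp
    ring
  have hEexp : q E E = q D' D' + c * c * q D D := by
    simp only [hE, map_add, map_smul, LinearMap.add_apply, LinearMap.smul_apply,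
      smul_eq_mul, hDD', hD'D]
    ring
  have hEE : q E E ≤ 0 := hneg E hHE
  have h1 : q D' D' ≤ 0 := by nlinarith [mul_self_nonneg c]
  refine ⟨h1, fun hD'D' w => ?_⟩
  have hEE0 : q E E = 0 := by
    have : 0 ≤ q E E := by nlinarith [mul_self_nonneg c]
    linarith
  have hEH : q E H = 0 := by rw [hsymm]; exact hHE
  -- reduce to w' in the hyperplane
  set w' : V := w - (q H w / q H H) • H with hw'
  have hHw' : q H w' = 0 := by
    simp only [hw', map_sub, map_smul, smul_eq_mul]
    field_simp
    ring
  have hEw : q E w = q E w' := by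
    simp only [hw', map_sub, map_smul, smul_eq_mul, hEH]
    ring
  set a : ℝ := q E w' with ha
  set b : ℝ := q w' w' with hb
  have hbneg : b ≤ 0 := hneg w' hHw'
  have hbne : (0:ℝ) < 1 - b := by linarith
  set t : ℝ := a / (1 - b) with ht
  have hkey : q (E + t • w') (E + t • w') ≤ 0 := by
    apply hneg
    simp only [map_add, map_smul, smul_eq_mul, hHw', hHE]
    ring
  have hexp : q (E + t • w') (E + t • w') = q E E + 2 * t * a + t * t * b := by
    simp only [map_add, map_smul, LinearMap.add_apply, LinearMap.smul_apply,
      smul_eq_mul, ha, hb]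
    have : q w' E = q E w' := hsymm w' E
    rw [this]; ring
  have ha0 : a = 0 := by
    rw [hexp, hEE0] at hkey
    have ht' : t * (1 - b) = a := by rw [ht]; field_simp
    rw [← ht'] at hkey
    have ht0 : t = 0 := by nlinarith [sq_nonneg t]
    rw [← ht', ht0]; ring
  show q E w = 0
  rw [hEw]; exact ha0
end

section
/- The restricted partition numbers are unimodal: for positive integers k, d, one has p(k,d,n) ≤ p(k,d,n+1) whenever 0 ≤ n < dk/2, and p(k,d,n) ≥ p(k,d,n+1) whenever dk/2 ≤ n < dk. -/
/-- `p k d n` is the number of partitions of `n` into at most `d` parts,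
each part at most `k`. -/
def p (k d n : ℕ) : ℕ :=
  Finset.card (Finset.univ.filter
    (fun P : Nat.Partition n => P.parts.card ≤ d ∧ ∀ i ∈ P.parts, i ≤ k))

namespace PU
variable (k d : ℕ)

abbrev T := Fin d → Fin (k + 1)

def w (f : T k d) : ℕ := ∑ j, (f j : ℕ)

variable {k d}

/-- decrement coordinate `j` -/
def dnf (f : T k d) (j : Fin d) : T k d :=
  Function.update f j ⟨(f j : ℕ) - 1, by have := (f j).isLt; omega⟩

/-- increment coordinate `j` (capped at `k`) -/
def upf (f : T k d) (j : Fin d) : T k d :=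
  Function.update f j ⟨min ((f j : ℕ) + 1) k, by have := (f j).isLt; omega⟩

variable (k d)

/-- raising operator -/
def U (v : T k d → ℚ) : T k d → ℚ :=
  fun f => ∑ j, ((f j : ℕ) : ℚ) * v (dnf f j)

/-- lowering operator -/
def E (v : T k d → ℚ) : T k d → ℚ :=
  fun f => ∑ j, ((k : ℚ) - ((f j : ℕ) : ℚ)) * v (upf f j)

/-- weight of a basis vector for the symmetrized inner product -/
def sig (f : T k d) : ℚ := ∏ j, (k.choose (f j) : ℚ)

/-- inner product -/
def B (v u : T k d → ℚ) : ℚ := ∑ f, sig k d f * v f * u f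

end PU

namespace PU
variable {k d : ℕ}

@[simp] lemma dnf_self (f : T k d) (j : Fin d) : ((dnf f j) j : ℕ) = (f j : ℕ) - 1 := by
  simp [dnf]

@[simp] lemma dnf_ne (f : T k d) {j l : Fin d} (h : l ≠ j) : (dnf f j) l = f l := by
  simp [dnf, Function.update_of_ne h]

@[simp] lemma upf_self (f : T k d) (j : Fin d) : ((upf f j) j : ℕ) = min ((f j : ℕ) + 1) k := by
  simp [upf]

@[simp] lemma upf_ne (f : T k d) {j l : Fin d} (h : l ≠ j) : (upf f j) l = f l := by
  simp [upf, Function.update_of_ne h]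

lemma upf_dnf (f : T k d) (j : Fin d) (h : (f j : ℕ) ≠ 0) : upf (dnf f j) j = f := by
  funext l
  rcases eq_or_ne l j with rfl | hl
  · have hk := (f l).isLt
    apply Fin.ext
    simp [upf, dnf]
    omega
  · rw [upf_ne _ hl, dnf_ne _ hl]

lemma dnf_upf (f : T k d) (j : Fin d) (h : (f j : ℕ) ≠ k) : dnf (upf f j) j = f := by
  funext l
  rcases eq_or_ne l j with rfl | hl
  · have hk := (f l).isLt
    apply Fin.ext
    simp [upf, dnf]
    omega
  · rw [dnf_ne _ hl, upf_ne _ hl]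

lemma dnf_zero (f : T k d) (j : Fin d) (h : (f j : ℕ) = 0) : dnf f j = f := by
  funext l
  rcases eq_or_ne l j with rfl | hl
  · apply Fin.ext; simp [dnf, h]
  · exact dnf_ne _ hl

lemma upf_top (f : T k d) (j : Fin d) (h : (f j : ℕ) = k) : upf f j = f := by
  funext l
  rcases eq_or_ne l j with rfl | hl
  · apply Fin.ext; simp [upf, h]
  · exact upf_ne _ hl

lemma fj_le (f : T k d) (j : Fin d) : (f j : ℕ) ≤ k := by
  have := (f j).isLt; omega

lemma sig_pos (f : T k d) : 0 < sig k d f := by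
  apply Finset.prod_pos
  intro j _
  have : 0 < k.choose (f j) := Nat.choose_pos (fj_le f j)
  exact_mod_cast this

lemma sig_eq (f : T k d) (j : Fin d) :
    sig k d f = (k.choose (f j) : ℚ) * ∏ l ∈ Finset.univ.erase j, (k.choose (f l) : ℚ) :=
  (Finset.mul_prod_erase _ _ (Finset.mem_univ j)).symm

lemma sig_update (f : T k d) (j : Fin d) (x : Fin (k+1)) :
    sig k d (Function.update f j x)
      = (k.choose x : ℚ) * ∏ l ∈ Finset.univ.erase j, (k.choose (f l) : ℚ) := by
  rw [sig_eq _ j, Function.update_self]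
  congr 1
  apply Finset.prod_congr rfl
  intro l hl
  rw [Function.update_of_ne (Finset.mem_erase.1 hl).1]

lemma key_coeff (f : T k d) (j : Fin d) (h : (f j : ℕ) ≠ 0) :
    sig k d f * ((f j : ℕ) : ℚ)
      = sig k d (dnf f j) * ((k : ℚ) - (((dnf f j) j : ℕ) : ℚ)) := by
  have hle := fj_le f j
  rw [sig_eq f j, dnf, sig_update]
  simp only [dnf_self]
  have hnat : k.choose (f j) * (f j : ℕ) = k.choose ((f j : ℕ) - 1) * (k - ((f j : ℕ) - 1)) := by
    obtain ⟨i, hi⟩ : ∃ i, (f j : ℕ) = i + 1 := ⟨(f j : ℕ) - 1, by omega⟩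
    rw [hi]
    simp only [Nat.add_sub_cancel]
    exact Nat.choose_succ_right_eq k i
  have hcast : ((k : ℚ) - (((f j : ℕ) - 1 : ℕ) : ℚ)) = ((k - ((f j : ℕ) - 1) : ℕ) : ℚ) := by
    have : (f j : ℕ) - 1 ≤ k := by omega
    push_cast [this]
    ring
  rw [mul_right_comm, ← Nat.cast_mul, hnat, Nat.cast_mul]
  rw [show (Function.update f j ⟨(f j : ℕ) - 1, by have := (f j).isLt; omega⟩ j : ℕ)
      = (f j : ℕ) - 1 by simp]
  rw [hcast]
  push_cast
  ring

lemma adjoint (v u : T k d → ℚ) : B k d (U k d v) u = B k d v (E k d u) := by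
  unfold B U E
  simp_rw [Finset.mul_sum, Finset.sum_mul]
  rw [Finset.sum_comm]
  conv_rhs => rw [Finset.sum_comm]
  apply Finset.sum_congr rfl
  intro j _
  conv_lhs => rw [← Finset.sum_filter_of_ne (p := fun f : T k d => (f j : ℕ) ≠ 0)
    (fun f _ hne h0 => hne (by rw [show ((f j : ℕ) : ℚ) = 0 by exact_mod_cast h0]; ring))]
  conv_rhs => rw [← Finset.sum_filter_of_ne (p := fun g : T k d => (g j : ℕ) ≠ k)
    (fun g _ hne h0 => hne (by rw [show ((k : ℚ) - ((g j : ℕ) : ℚ)) = 0 by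
      rw [show ((g j : ℕ) : ℚ) = (k : ℚ) by exact_mod_cast h0]; ring]; ring))]
  apply Finset.sum_nbij' (i := fun f => dnf f j) (j := fun g => upf g j)
  · intro f hf
    simp only [Finset.mem_filter, Finset.mem_univ, true_and] at hf ⊢
    have := fj_le f j
    simp only [dnf_self]
    omega
  · intro g hg
    simp only [Finset.mem_filter, Finset.mem_univ, true_and] at hg ⊢
    have := fj_le g j
    simp only [upf_self]
    omega
  · intro f hf
    simp only [Finset.mem_filter, Finset.mem_univ, true_and] at hf
    exact upf_dnf f j hf
  · intro g hg
    simp only [Finset.mem_filter, Finset.mem_univ, true_and] at hg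
    exact dnf_upf g j hg
  · intro f hf
    simp only [Finset.mem_filter, Finset.mem_univ, true_and] at hf
    rw [upf_dnf f j hf]
    have := key_coeff f j hf
    linear_combination this * (v (dnf f j) * u f)

end PU

namespace PU
variable {k d : ℕ}

lemma dnf_upf_comm (f : T k d) {j j' : Fin d} (h : j ≠ j') :
    dnf (upf f j') j = upf (dnf f j) j' := by
  funext l
  rcases eq_or_ne l j with rfl | hl
  · apply Fin.ext
    rw [dnf_self, upf_ne _ h, show (upf (dnf f l) j') l = (dnf f l) l from upf_ne _ h, dnf_self]
  · rcases eq_or_ne l j' with rfl | hl'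
    · apply Fin.ext
      rw [dnf_ne _ (fun hh => h hh.symm), upf_self]
      rw [upf_self, dnf_ne _ (fun hh => h hh.symm)]
    · rw [dnf_ne _ hl, upf_ne _ hl', upf_ne _ hl', dnf_ne _ hl]

lemma commutator (v : T k d → ℚ) (f : T k d) :
    E k d (U k d v) f - U k d (E k d v) f
      = ((d : ℚ) * (k : ℚ) - 2 * ((w k d f : ℕ) : ℚ)) * v f := by
  have hA : E k d (U k d v) f
      = ∑ j', ∑ j, ((k : ℚ) - ((f j' : ℕ) : ℚ)) * (((upf f j') j : ℕ) : ℚ)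
          * v (dnf (upf f j') j) := by
    unfold E U
    apply Finset.sum_congr rfl
    intro j' _
    rw [Finset.mul_sum]
    apply Finset.sum_congr rfl
    intro j _
    ring
  have hB : U k d (E k d v) f
      = ∑ j', ∑ j, ((f j : ℕ) : ℚ) * ((k : ℚ) - (((dnf f j) j' : ℕ) : ℚ))
          * v (upf (dnf f j) j') := by
    unfold U E
    rw [Finset.sum_comm]
    apply Finset.sum_congr rfl
    intro j _
    rw [Finset.mul_sum]
    exact Finset.sum_congr rfl (fun l _ => by ring)
  rw [hA, hB, ← Finset.sum_sub_distrib]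
  simp_rw [← Finset.sum_sub_distrib]
  have diag : ∀ j : Fin d,
      ((k : ℚ) - ((f j : ℕ) : ℚ)) * (((upf f j) j : ℕ) : ℚ) * v (dnf (upf f j) j)
        - ((f j : ℕ) : ℚ) * ((k : ℚ) - (((dnf f j) j : ℕ) : ℚ)) * v (upf (dnf f j) j)
      = ((k : ℚ) - 2 * ((f j : ℕ) : ℚ)) * v f := by
    intro j
    have hle := fj_le f j
    rcases eq_or_ne ((f j : ℕ)) 0 with h0 | h0
    · rcases eq_or_ne ((f j : ℕ)) k with hk | hk
      · rw [upf_top f j hk, dnf_zero f j h0]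
        rw [show ((f j : ℕ) : ℚ) = 0 from by exact_mod_cast h0,
          show (k : ℚ) = 0 from by exact_mod_cast (show k = 0 by omega)]
        ring
      · rw [dnf_upf f j hk, dnf_zero f j h0, upf_self, h0]
        rw [show min (0 + 1) k = 1 by omega]
        push_cast
        ring
    · rcases eq_or_ne ((f j : ℕ)) k with hk | hk
      · rw [upf_top f j hk, upf_dnf f j h0]
        rw [show ((dnf f j) j : ℕ) = (f j : ℕ) - 1 from dnf_self f j]
        have h1 : (((f j : ℕ) - 1 : ℕ) : ℚ) = ((f j : ℕ) : ℚ) - 1 := by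
          have : 1 ≤ (f j : ℕ) := by omega
          push_cast [this]
          ring
        rw [h1, show ((f j : ℕ) : ℚ) = (k : ℚ) from by exact_mod_cast hk]
        ring
      · rw [dnf_upf f j hk, upf_dnf f j h0, upf_self]
        rw [show ((dnf f j) j : ℕ) = (f j : ℕ) - 1 from dnf_self f j]
        have hmin : min ((f j : ℕ) + 1) k = (f j : ℕ) + 1 := by omega
        have h1 : (((f j : ℕ) - 1 : ℕ) : ℚ) = ((f j : ℕ) : ℚ) - 1 := by
          have : 1 ≤ (f j : ℕ) := by omega
          push_cast [this]
          ring
        rw [hmin, h1]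
        push_cast
        ring
  calc (∑ j', ∑ j, (((k : ℚ) - ((f j' : ℕ) : ℚ)) * (((upf f j') j : ℕ) : ℚ)
            * v (dnf (upf f j') j)
          - ((f j : ℕ) : ℚ) * ((k : ℚ) - (((dnf f j) j' : ℕ) : ℚ)) * v (upf (dnf f j) j')))
      = ∑ j' : Fin d, ((k : ℚ) - 2 * ((f j' : ℕ) : ℚ)) * v f := by
        apply Finset.sum_congr rfl
        intro j' _
        rw [Finset.sum_eq_single j']
        · exact diag j'
        · intro j _ hjj
          rw [upf_ne f (show j ≠ j' from hjj), dnf_upf_comm f hjj,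
            dnf_ne f (show j' ≠ j from fun hh => hjj hh.symm)]
          ring
        · intro h; exact absurd (Finset.mem_univ j') h
    _ = ((d : ℚ) * (k : ℚ) - 2 * ((w k d f : ℕ) : ℚ)) * v f := by
        rw [← Finset.sum_mul]
        congr 1
        rw [Finset.sum_sub_distrib]
        have hw : ((w k d f : ℕ) : ℚ) = ∑ j, ((f j : ℕ) : ℚ) := by
          unfold w; push_cast; rfl
        rw [hw, Finset.sum_const, Finset.card_univ, ← Finset.mul_sum]
        simp

end PU

namespace PU
variable {k d : ℕ}

/-- `v` is supported on weight `n` -/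
def wt (k d : ℕ) (n : ℕ) (v : T k d → ℚ) : Prop := ∀ f, w k d f ≠ n → v f = 0

lemma Bsymm (v u : T k d → ℚ) : B k d v u = B k d u v :=
  Finset.sum_congr rfl (fun f _ => by ring)

lemma Bpos (v : T k d → ℚ) : 0 ≤ B k d v v :=
  Finset.sum_nonneg (fun f _ => by
    have := sig_pos (k := k) (d := d) f
    nlinarith [sq_nonneg (v f)])

lemma Bzero {v : T k d → ℚ} (h : B k d v v = 0) : v = 0 := by
  funext f
  have hall := (Finset.sum_eq_zero_iff_of_nonneg (fun g (_ : g ∈ Finset.univ) => by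
    have := sig_pos (k := k) (d := d) g
    nlinarith [sq_nonneg (v g)])).1 h f (Finset.mem_univ f)
  have hs := sig_pos (k := k) (d := d) f
  have : v f * v f = 0 := by
    by_contra hne
    exact hne (by nlinarith [mul_self_nonneg (v f)])
  simpa using mul_self_eq_zero.1 this

lemma master {n : ℕ} {v : T k d → ℚ} (hv : wt k d n v) :
    B k d (U k d v) (U k d v)
      = B k d (E k d v) (E k d v) + ((d : ℚ) * (k : ℚ) - 2 * (n : ℚ)) * B k d v v := by
  rw [adjoint]
  have step : B k d v (E k d (U k d v))
      = B k d v (U k d (E k d v)) + ((d : ℚ) * (k : ℚ) - 2 * (n : ℚ)) * B k d v v := by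
    unfold B
    rw [Finset.mul_sum, ← Finset.sum_add_distrib]
    apply Finset.sum_congr rfl
    intro f _
    have hc := commutator v f
    rcases eq_or_ne (v f) 0 with h0 | h0
    · rw [h0]; ring
    · have hw : w k d f = n := by by_contra hne; exact h0 (hv f hne)
      rw [← hw]
      linear_combination hc * (sig k d f * v f)
  rw [step, Bsymm _ (U k d (E k d v)), adjoint, Bsymm]

lemma U_inj_wt {n : ℕ} (h2 : 2 * n < d * k) {v : T k d → ℚ} (hv : wt k d n v)
    (hU : U k d v = 0) : v = 0 := by
  have hm := master hv
  rw [hU] at hm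
  have h0 : B k d (0 : T k d → ℚ) 0 = 0 := by unfold B; simp
  rw [h0] at hm
  have hc : (0 : ℚ) < (d : ℚ) * (k : ℚ) - 2 * (n : ℚ) := by
    have : (2 * n : ℚ) < (d * k : ℚ) := by exact_mod_cast h2
    push_cast at this ⊢
    linarith
  apply Bzero (v := v)
  nlinarith [Bpos (E k d v), Bpos v]

lemma E_inj_wt {n : ℕ} (h2 : d * k < 2 * n) {v : T k d → ℚ} (hv : wt k d n v)
    (hE : E k d v = 0) : v = 0 := by
  have hm := master hv
  rw [hE] at hm
  have h0 : B k d (0 : T k d → ℚ) 0 = 0 := by unfold B; simp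
  rw [h0] at hm
  have hc : (d : ℚ) * (k : ℚ) - 2 * (n : ℚ) < 0 := by
    have : (d * k : ℚ) < (2 * n : ℚ) := by exact_mod_cast h2
    push_cast at this ⊢
    linarith
  apply Bzero (v := v)
  nlinarith [Bpos (U k d v), Bpos v]

end PU

namespace PU
variable {k d : ℕ}

lemma w_update (f : T k d) (j : Fin d) (b : ℕ) (hb : b < k + 1) :
    w k d (Function.update f j ⟨b, hb⟩) + (f j : ℕ) = w k d f + b := by
  unfold w
  have h1 : ∀ l, ((Function.update f j ⟨b, hb⟩ l) : ℕ)
      = Function.update (fun l => (f l : ℕ)) j b l := by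
    intro l
    rcases eq_or_ne l j with rfl | hl
    · simp
    · simp [Function.update_of_ne hl]
  simp_rw [h1]
  rw [Finset.sum_update_of_mem (Finset.mem_univ j),
    ← Finset.add_sum_erase _ (fun l => ((f l : ℕ))) (Finset.mem_univ j),
    show Finset.univ \ {j} = Finset.univ.erase j from by
      rw [Finset.erase_eq]]
  ring

lemma w_dnf (f : T k d) (j : Fin d) (h : (f j : ℕ) ≠ 0) :
    w k d (dnf f j) + 1 = w k d f := by
  have h1 := w_update f j ((f j : ℕ) - 1) (by have := (f j).isLt; omega)
  unfold dnf
  omega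

lemma w_upf (f : T k d) (j : Fin d) (h : (f j : ℕ) ≠ k) :
    w k d (upf f j) = w k d f + 1 := by
  have hle := fj_le f j
  have h1 := w_update f j (min ((f j : ℕ) + 1) k) (by have := (f j).isLt; omega)
  unfold upf
  have hm : min ((f j : ℕ) + 1) k = (f j : ℕ) + 1 := by omega
  omega

lemma U_wt {n : ℕ} {v : T k d → ℚ} (hv : wt k d n v) : wt k d (n + 1) (U k d v) := by
  intro f hf
  unfold U
  apply Finset.sum_eq_zero
  intro j _
  rcases eq_or_ne ((f j : ℕ)) 0 with h0 | h0
  · rw [show ((f j : ℕ) : ℚ) = 0 from by exact_mod_cast h0]; ring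
  · rw [hv (dnf f j) (by have := w_dnf f j h0; omega)]; ring

lemma E_wt {n : ℕ} {v : T k d → ℚ} (hv : wt k d (n + 1) v) : wt k d n (E k d v) := by
  intro f hf
  unfold E
  apply Finset.sum_eq_zero
  intro j _
  rcases eq_or_ne ((f j : ℕ)) k with h0 | h0
  · rw [show ((k : ℚ) - ((f j : ℕ) : ℚ)) = 0 from by
      rw [show ((f j : ℕ) : ℚ) = (k : ℚ) from by exact_mod_cast h0]; ring]
    ring
  · rw [hv (upf f j) (by have := w_upf f j h0; omega)]; ring

/-- `v` is symmetric (invariant under permutations of coordinates) -/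
def symm (k d : ℕ) (v : T k d → ℚ) : Prop :=
  ∀ (π : Equiv.Perm (Fin d)) (f : T k d), v (f ∘ π) = v f

lemma dnf_comp (f : T k d) (π : Equiv.Perm (Fin d)) (j : Fin d) :
    dnf (f ∘ π) j = (dnf f (π j)) ∘ π := by
  funext l
  rcases eq_or_ne l j with rfl | hl
  · apply Fin.ext
    change ((dnf (f ∘ π) l) l : ℕ) = ((dnf f (π l)) (π l) : ℕ)
    rw [dnf_self, dnf_self]
    rfl
  · rw [dnf_ne _ hl]
    rw [show ((dnf f (π j)) ∘ π) l = (dnf f (π j)) (π l) from rfl,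
      dnf_ne _ (fun hh => hl (π.injective hh))]
    rfl

lemma upf_comp (f : T k d) (π : Equiv.Perm (Fin d)) (j : Fin d) :
    upf (f ∘ π) j = (upf f (π j)) ∘ π := by
  funext l
  rcases eq_or_ne l j with rfl | hl
  · apply Fin.ext
    change ((upf (f ∘ π) l) l : ℕ) = ((upf f (π l)) (π l) : ℕ)
    rw [upf_self, upf_self]
    rfl
  · rw [upf_ne _ hl]
    rw [show ((upf f (π j)) ∘ π) l = (upf f (π j)) (π l) from rfl,
      upf_ne _ (fun hh => hl (π.injective hh))]
    rfl

lemma U_symm {v : T k d → ℚ} (hv : symm k d v) : symm k d (U k d v) := by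
  intro π f
  unfold U
  rw [← Equiv.sum_comp π (fun l => ((f l : ℕ) : ℚ) * v (dnf f l))]
  apply Finset.sum_congr rfl
  intro j _
  rw [dnf_comp f π j, hv π]
  rfl

lemma E_symm {v : T k d → ℚ} (hv : symm k d v) : symm k d (E k d v) := by
  intro π f
  unfold E
  rw [← Equiv.sum_comp π (fun l => ((k : ℚ) - ((f l : ℕ) : ℚ)) * v (upf f l))]
  apply Finset.sum_congr rfl
  intro j _
  rw [upf_comp f π j, hv π]
  rfl

lemma w_comp (f : T k d) (π : Equiv.Perm (Fin d)) : w k d (f ∘ π) = w k d f := by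
  unfold w
  exact Equiv.sum_comp π (fun l => ((f l : ℕ)))

end PU

namespace PU
variable {k d : ℕ}

/-- monotone representatives of weight `n` -/
def Q (k d n : ℕ) : Type := {f : T k d // w k d f = n ∧ Monotone f}

noncomputable instance (n : ℕ) : Fintype (Q k d n) := by
  classical exact Subtype.fintype _

/-- sorted representative -/
def rep (f : T k d) : T k d := f ∘ Tuple.sort f

lemma rep_monotone (f : T k d) : Monotone (rep f) := Tuple.monotone_sort f

lemma rep_w (f : T k d) : w k d (rep f) = w k d f := w_comp f _

lemma rep_comp (f : T k d) (π : Equiv.Perm (Fin d)) : rep (f ∘ π) = rep f :=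
  Tuple.comp_perm_comp_sort_eq_comp_sort

lemma rep_of_monotone {f : T k d} (h : Monotone f) : rep f = f := by
  unfold rep
  rw [Tuple.sort_eq_refl_iff_monotone.2 h]
  rfl

lemma symm_apply_rep {v : T k d → ℚ} (hv : symm k d v) (f : T k d) : v (rep f) = v f :=
  hv _ f

/-- symmetrization of a function on monotone representatives -/
noncomputable def Psi (k d n : ℕ) (u : Q k d n → ℚ) : T k d → ℚ :=
  fun f => if h : w k d f = n then u ⟨rep f, by rw [rep_w]; exact h, rep_monotone f⟩ else 0

lemma Psi_wt (n : ℕ) (u : Q k d n → ℚ) : wt k d n (Psi k d n u) := by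
  intro f hf
  unfold Psi
  rw [dif_neg hf]

lemma Psi_symm (n : ℕ) (u : Q k d n → ℚ) : symm k d (Psi k d n u) := by
  intro π f
  unfold Psi
  rcases eq_or_ne (w k d f) n with h | h
  · rw [dif_pos h, dif_pos (by rw [w_comp]; exact h)]
    congr 1
    exact Subtype.ext (rep_comp f π)
  · rw [dif_neg h, dif_neg (by rw [w_comp]; exact h)]

lemma Psi_inj (n : ℕ) {u : Q k d n → ℚ} (h : Psi k d n u = 0) : u = 0 := by
  funext q
  have := congrFun h q.val
  unfold Psi at this
  rw [dif_pos q.2.1] at this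
  rw [show (0 : T k d → ℚ) q.val = 0 from rfl] at this
  rw [show (0 : Q k d n → ℚ) q = (0 : ℚ) from rfl, ← this]
  congr 1
  exact Subtype.ext (rep_of_monotone q.2.2).symm

lemma vanish {n : ℕ} {v : T k d → ℚ} (hs : symm k d v) (hw : wt k d n v)
    (h : ∀ q : Q k d n, v q.val = 0) : v = 0 := by
  funext f
  rcases eq_or_ne (w k d f) n with hn | hn
  · rw [show (0 : T k d → ℚ) f = 0 from rfl, ← symm_apply_rep hs f]
    exact h ⟨rep f, by rw [rep_w]; exact hn, rep_monotone f⟩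
  · exact hw f hn

end PU

namespace PU
variable {k d : ℕ}

noncomputable def PsiL (k d n : ℕ) : (Q k d n → ℚ) →ₗ[ℚ] (T k d → ℚ) where
  toFun := Psi k d n
  map_add' u u' := by
    funext f
    unfold Psi
    rcases eq_or_ne (w k d f) n with h | h
    · rw [Pi.add_apply]; rw [dif_pos h, dif_pos h, dif_pos h]; rfl
    · rw [Pi.add_apply]; rw [dif_neg h, dif_neg h, dif_neg h]; ring
  map_smul' c u := by
    funext f
    unfold Psi
    rcases eq_or_ne (w k d f) n with h | h
    · simp only [RingHom.id_apply, Pi.smul_apply]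
      rw [dif_pos h, dif_pos h]
      rfl
    · simp only [RingHom.id_apply, Pi.smul_apply]
      rw [dif_neg h, dif_neg h]; simp

def UL (k d : ℕ) : (T k d → ℚ) →ₗ[ℚ] (T k d → ℚ) where
  toFun := U k d
  map_add' v v' := by
    funext f
    unfold U
    simp [mul_add, Finset.sum_add_distrib]
  map_smul' c v := by
    funext f
    unfold U
    simp [Finset.mul_sum]
    apply Finset.sum_congr rfl
    intro j _
    ring

def EL (k d : ℕ) : (T k d → ℚ) →ₗ[ℚ] (T k d → ℚ) where
  toFun := E k d
  map_add' v v' := by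
    funext f
    unfold E
    simp [mul_add, Finset.sum_add_distrib]
  map_smul' c v := by
    funext f
    unfold E
    simp [Finset.mul_sum]
    apply Finset.sum_congr rfl
    intro j _
    ring

def RL (k d m : ℕ) : (T k d → ℚ) →ₗ[ℚ] (Q k d m → ℚ) where
  toFun v := fun q => v q.val
  map_add' v v' := rfl
  map_smul' c v := rfl

lemma card_mono_up {n : ℕ} (h2 : 2 * n < d * k) :
    Fintype.card (Q k d n) ≤ Fintype.card (Q k d (n + 1)) := by
  have hinj : Function.Injective ((RL k d (n+1)) ∘ₗ (UL k d) ∘ₗ (PsiL k d n)) := by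
    rw [injective_iff_map_eq_zero]
    intro u hu
    have hUv : U k d (Psi k d n u) = 0 :=
      vanish (U_symm (Psi_symm n u)) (U_wt (Psi_wt n u)) (fun q => congrFun hu q)
    exact Psi_inj n (U_inj_wt h2 (Psi_wt n u) hUv)
  have := LinearMap.finrank_le_finrank_of_injective hinj
  rwa [Module.finrank_fintype_fun_eq_card, Module.finrank_fintype_fun_eq_card] at this

lemma card_mono_down {n : ℕ} (h2 : d * k < 2 * (n + 1)) :
    Fintype.card (Q k d (n + 1)) ≤ Fintype.card (Q k d n) := by
  have hinj : Function.Injective ((RL k d n) ∘ₗ (EL k d) ∘ₗ (PsiL k d (n + 1))) := by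
    rw [injective_iff_map_eq_zero]
    intro u hu
    have hEv : E k d (Psi k d (n + 1) u) = 0 :=
      vanish (E_symm (Psi_symm (n + 1) u)) (E_wt (Psi_wt (n + 1) u)) (fun q => congrFun hu q)
    exact Psi_inj (n + 1) (E_inj_wt h2 (Psi_wt (n + 1) u) hEv)
  have := LinearMap.finrank_le_finrank_of_injective hinj
  rwa [Module.finrank_fintype_fun_eq_card, Module.finrank_fintype_fun_eq_card] at this

end PU

namespace PU
variable {k d : ℕ}

/-- multiset model -/
def M (k d n : ℕ) : Type :=
  {m : Multiset ℕ // Multiset.card m = d ∧ m.sum = n ∧ ∀ x ∈ m, x ≤ k}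

lemma ofFn_get_cast {α : Type*} (l : List α) {d : ℕ} (h : l.length = d) :
    List.ofFn (fun j : Fin d => l.get (Fin.cast h.symm j)) = l := by
  subst h
  exact List.ofFn_get l

/-- the multiset of values of a tuple -/
def tupleM (f : T k d) : Multiset ℕ := Finset.univ.val.map (fun j => (f j : ℕ))

lemma tupleM_eq_ofFn (f : T k d) : tupleM f = (List.ofFn (fun j => (f j : ℕ)) : List ℕ) := by
  unfold tupleM
  rw [Fin.univ_val_map]

lemma tupleM_card (f : T k d) : Multiset.card (tupleM f) = d := by
  unfold tupleM
  rw [Multiset.card_map]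
  exact Finset.card_univ.trans (Fintype.card_fin d)

lemma tupleM_sum (f : T k d) : (tupleM f).sum = w k d f := by
  unfold tupleM w
  rw [Finset.sum]

lemma tupleM_le (f : T k d) : ∀ x ∈ tupleM f, x ≤ k := by
  intro x hx
  unfold tupleM at hx
  obtain ⟨j, _, rfl⟩ := Multiset.mem_map.1 hx
  exact fj_le f j

lemma tupleM_comp (f : T k d) (π : Equiv.Perm (Fin d)) : tupleM (f ∘ π) = tupleM f := by
  rw [tupleM_eq_ofFn, tupleM_eq_ofFn]
  exact Multiset.coe_eq_coe.2 (π.ofFn_comp_perm (fun j => (f j : ℕ)))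

noncomputable def QtoM (n : ℕ) (q : Q k d n) : M k d n :=
  ⟨tupleM q.val, tupleM_card q.val, by rw [tupleM_sum, q.2.1], tupleM_le q.val⟩

lemma QtoM_bij (n : ℕ) : Function.Bijective (QtoM (k := k) (d := d) n) := by
  constructor
  · intro q q' h
    have hm : tupleM q.val = tupleM q'.val := congrArg Subtype.val h
    rw [tupleM_eq_ofFn, tupleM_eq_ofFn] at hm
    have hperm := Multiset.coe_eq_coe.1 hm
    have hmono : Monotone (fun j => ((q.val j : ℕ))) :=
      fun a b hab => q.2.2 hab
    have hmono' : Monotone (fun j => ((q'.val j : ℕ))) :=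
      fun a b hab => q'.2.2 hab
    have := List.Perm.eq_of_pairwise' hmono.sortedLE_ofFn.pairwise hmono'.sortedLE_ofFn.pairwise hperm
    have hfun := List.ofFn_injective this
    apply Subtype.ext
    funext j
    exact Fin.ext (congrFun hfun j)
  · rintro ⟨m, hcard, hsum, hle⟩
    set l := Multiset.sort m (· ≤ ·) with hl
    have hlen : l.length = d := by
      rw [hl, Multiset.length_sort, hcard]
    have hmem : ∀ i : Fin l.length, l.get i ≤ k := by
      intro i
      apply hle
      rw [← Multiset.mem_sort (· ≤ ·) (s := m)]
      exact l.get_mem i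
    refine ⟨⟨fun j => ⟨l.get (Fin.cast hlen.symm j), by
        have := hmem (Fin.cast hlen.symm j); omega⟩, ?_, ?_⟩, ?_⟩
    · -- weight
      show w k d _ = n
      unfold w
      have : ∀ j : Fin d, ((⟨l.get (Fin.cast hlen.symm j), by
          have := hmem (Fin.cast hlen.symm j); omega⟩ : Fin (k+1)) : ℕ)
          = l.get (Fin.cast hlen.symm j) := fun j => rfl
      calc (∑ j : Fin d, ((⟨l.get (Fin.cast hlen.symm j), by
              have := hmem (Fin.cast hlen.symm j); omega⟩ : Fin (k+1)) : ℕ))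
          = ∑ j : Fin d, l.get (Fin.cast hlen.symm j) := Finset.sum_congr rfl (fun j _ => rfl)
        _ = (List.ofFn (fun j : Fin d => l.get (Fin.cast hlen.symm j))).sum := by
              rw [List.sum_ofFn]
        _ = l.sum := by rw [ofFn_get_cast l hlen]
        _ = m.sum := by rw [hl]; exact congrArg Multiset.sum (Multiset.sort_eq m _)
        _ = n := hsum
    · -- monotone
      intro a b hab
      have hs : l.Pairwise (· ≤ ·) := by rw [hl]; exact Multiset.pairwise_sort m _
      have := List.Pairwise.rel_get_of_le hs (show Fin.cast hlen.symm a ≤ Fin.cast hlen.symm b from hab)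
      exact this
    · -- maps to m
      apply Subtype.ext
      show tupleM _ = m
      rw [tupleM_eq_ofFn]
      have : (fun j : Fin d => ((⟨l.get (Fin.cast hlen.symm j), by
          have := hmem (Fin.cast hlen.symm j); omega⟩ : Fin (k+1)) : ℕ))
          = fun j : Fin d => l.get (Fin.cast hlen.symm j) := rfl
      rw [this, ofFn_get_cast l hlen, hl]
      exact Multiset.sort_eq m _

end PU

namespace PU
variable {k d : ℕ}

abbrev Psub (k d n : ℕ) : Type :=
  {P : Nat.Partition n // P.parts.card ≤ d ∧ ∀ i ∈ P.parts, i ≤ k}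

def PtoM (n : ℕ) (P : Psub k d n) : M k d n := by
  refine ⟨P.val.parts + Multiset.replicate (d - Multiset.card P.val.parts) 0, ?_, ?_, ?_⟩
  · rw [Multiset.card_add, Multiset.card_replicate]
    have := P.2.1
    omega
  · rw [Multiset.sum_add, Multiset.sum_replicate, smul_zero, add_zero]
    exact P.val.parts_sum
  · intro x hx
    rcases Multiset.mem_add.1 hx with h | h
    · exact P.2.2 x h
    · rw [Multiset.eq_of_mem_replicate h]
      omega

lemma PtoM_bij (n : ℕ) : Function.Bijective (PtoM (k := k) (d := d) n) := by
  have hrec : ∀ P : Psub k d n,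
      Multiset.filter (fun x => x ≠ 0) ((PtoM n P).val) = P.val.parts := by
    intro P
    show Multiset.filter _ (P.val.parts + Multiset.replicate _ 0) = _
    rw [Multiset.filter_add,
      Multiset.filter_eq_self.2 (fun a ha => by have := P.val.parts_pos ha; omega),
      Multiset.filter_eq_nil.2 (fun a ha => by
        have := Multiset.eq_of_mem_replicate ha; simp [this]), add_zero]
  constructor
  · intro P P' h
    apply Subtype.ext
    ext1
    rw [← hrec P, ← hrec P', h]
  · rintro ⟨m, hcard, hsum, hle⟩
    have hsplit := Multiset.filter_add_not (fun x => x ≠ 0) m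
    have hzero : ∀ b ∈ Multiset.filter (fun x => ¬x ≠ 0) m, b = 0 := by
      intro b hb
      have := (Multiset.mem_filter.1 hb).2
      omega
    have hrep : Multiset.filter (fun x => ¬x ≠ 0) m
        = Multiset.replicate (Multiset.card (Multiset.filter (fun x => ¬x ≠ 0) m)) 0 :=
      Multiset.eq_replicate.2 ⟨rfl, hzero⟩
    have hcards : Multiset.card (Multiset.filter (fun x => x ≠ 0) m)
        + Multiset.card (Multiset.filter (fun x => ¬x ≠ 0) m) = d := by
      rw [← Multiset.card_add, hsplit, hcard]
    refine ⟨⟨⟨Multiset.filter (fun x => x ≠ 0) m, ?_, ?_⟩, ?_, ?_⟩, ?_⟩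
    · intro i hi
      have := (Multiset.mem_filter.1 hi).2
      omega
    · have : (Multiset.filter (fun x => ¬x ≠ 0) m).sum = 0 :=
        Multiset.sum_eq_zero hzero
      have h2 : (Multiset.filter (fun x => x ≠ 0) m).sum
          + (Multiset.filter (fun x => ¬x ≠ 0) m).sum = n := by
        rw [← Multiset.sum_add, hsplit, hsum]
      omega
    · show Multiset.card (Multiset.filter (fun x => x ≠ 0) m) ≤ d
      omega
    · intro i hi
      exact hle i (Multiset.mem_of_mem_filter hi)
    · apply Subtype.ext
      show Multiset.filter (fun x => x ≠ 0) m + Multiset.replicate _ 0 = m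
      have hd : d - Multiset.card (Multiset.filter (fun x => x ≠ 0) m)
          = Multiset.card (Multiset.filter (fun x => ¬x ≠ 0) m) := by omega
      rw [hd, ← hrep]
      exact hsplit

lemma card_Q_eq (n : ℕ) : Fintype.card (Q k d n) = p k d n := by
  classical
  have e : Q k d n ≃ Psub k d n :=
    (Equiv.ofBijective _ (QtoM_bij n)).trans (Equiv.ofBijective _ (PtoM_bij n)).symm
  rw [Fintype.card_congr e]
  unfold p
  rw [Fintype.card_subtype]

end PU

/-- Unimodality of restricted partition numbers. -/
theorem p_unimodal (k d : ℕ) (hk : 0 < k) (hd : 0 < d) :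
    (∀ n : ℕ, 2 * n < d * k → p k d n ≤ p k d (n + 1)) ∧
    (∀ n : ℕ, d * k ≤ 2 * n → n < d * k → p k d (n + 1) ≤ p k d n) := by
  constructor
  · intro n hn
    have h := PU.card_mono_up (k := k) (d := d) (n := n) hn
    rwa [PU.card_Q_eq, PU.card_Q_eq] at h
  · intro n h1 h2
    have h := PU.card_mono_down (k := k) (d := d) (n := n) (by omega)
    rwa [PU.card_Q_eq, PU.card_Q_eq] at h
end

section
/- Let V be a finite-dimensional representation of sl₂(ℂ) with standard generators H, X, Y, and let V_λ denote the λ-eigenspace of H. Then for every integer λ > 0, the iterated map Y^λ : V_λ → V_{−λ} is a linear isomorphism. -/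
open Module

attribute [local instance] LieRing.ofAssociativeRing

section helpers

universe u
variable {V : Type u} [AddCommGroup V] [Module ℂ V]

lemma sl2aux_step_down {H Y : Module.End ℂ V}
    (hHY : H * Y - Y * H = (-2 : ℂ) • Y) {μ : ℂ} {w : V} (hw : H w = μ • w) :
    H (Y w) = (μ - 2) • Y w := by
  have h := congrArg (fun f : Module.End ℂ V => f w) hHY
  simp only [LinearMap.sub_apply, Module.End.mul_apply, LinearMap.smul_apply] at h
  rw [hw, map_smul, sub_eq_iff_eq_add] at h
  rw [h]; module

lemma sl2aux_pow_down {H Y : Module.End ℂ V}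
    (hHY : H * Y - Y * H = (-2 : ℂ) • Y) {μ : ℂ} {v : V}
    (hv : v ∈ Module.End.eigenspace H μ) (k : ℕ) :
    (Y ^ k) v ∈ Module.End.eigenspace H (μ - 2 * k) := by
  induction k with
  | zero => simpa using hv
  | succ k ih =>
    rw [Module.End.mem_eigenspace_iff] at ih ⊢
    rw [pow_succ', Module.End.mul_apply]
    rw [sl2aux_step_down hHY ih]
    congr 1; push_cast; ring

lemma sl2aux_pow_up {H X : Module.End ℂ V}
    (hHX : H * X - X * H = (2 : ℂ) • X) {μ : ℂ} {v : V}
    (hv : v ∈ Module.End.eigenspace H μ) (k : ℕ) :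
    (X ^ k) v ∈ Module.End.eigenspace H (μ + 2 * k) := by
  have hHX' : (-H) * X - X * (-H) = (-2 : ℂ) • X := by
    rw [neg_mul, mul_neg, neg_sub_neg, ← neg_sub, hHX]; module
  have hv' : v ∈ Module.End.eigenspace (-H) (-μ) := by
    rw [Module.End.mem_eigenspace_iff] at hv ⊢
    simp [hv]
  have h := sl2aux_pow_down hHX' hv' k
  rw [Module.End.mem_eigenspace_iff] at h ⊢
  have h2 : H ((X ^ k) v) = -((-H) ((X ^ k) v)) := by simp
  rw [h2, h]; module

lemma sl2aux_mapQ_pow (W : Submodule ℂ V) (f : Module.End ℂ V) (hf : W ≤ W.comap f)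
    (k : ℕ) (x : V) :
    ((W.mapQ W f hf) ^ k) (W.mkQ x) = W.mkQ ((f ^ k) x) := by
  induction k with
  | zero => simp
  | succ k ih =>
    rw [pow_succ', pow_succ', Module.End.mul_apply, Module.End.mul_apply, ih]
    simp [Submodule.mapQ_apply, Submodule.mkQ_apply]

end helpers

universe u in
lemma sl2aux_key (N : ℕ) :
    ∀ (V : Type u) [AddCommGroup V] [Module ℂ V] [FiniteDimensional ℂ V]
      (H X Y : Module.End ℂ V),
      (H * X - X * H = (2 : ℂ) • X) → (H * Y - Y * H = (-2 : ℂ) • Y) →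
      (X * Y - Y * X = H) →
      Module.finrank ℂ V ≤ N →
      ∀ (l : ℕ), 0 < l → ∀ v ∈ Module.End.eigenspace H (l : ℂ), (Y ^ l) v = 0 → v = 0 := by
  induction N with
  | zero =>
    intro V _ _ _ H X Y _ _ _ hrank l hl v hv hY0
    have hsub : Subsingleton V := by
      have h0 : Module.finrank ℂ V = 0 := Nat.le_zero.mp hrank
      exact Module.finrank_zero_iff.mp h0
    exact Subsingleton.elim v 0
  | succ N ih =>
    intro V _ _ _ H X Y hHX hHY hXY hrank l hl v hv hYl
    classical
    by_cases hH0 : H = 0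
    · rw [Module.End.mem_eigenspace_iff, hH0] at hv
      have h1 : (l : ℂ) • v = 0 := by simpa using hv.symm
      have hlne : (l : ℂ) ≠ 0 := Nat.cast_ne_zero.mpr hl.ne'
      simpa [hlne] using h1
    · have hnt : Nontrivial V := by
        by_contra hns
        rw [not_nontrivial_iff_subsingleton] at hns
        exact hH0 (LinearMap.ext fun x => Subsingleton.elim _ _)
      obtain ⟨μ₀, hμ₀⟩ := Module.End.exists_eigenvalue H
      obtain ⟨v₀, hv₀⟩ := hμ₀.exists_hasEigenvector
      have hex : ∃ m : ℕ, (X ^ m) v₀ = 0 := by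
        by_contra hcon
        push_neg at hcon
        have hinj : Function.Injective (fun m : ℕ => μ₀ + 2 * (m : ℂ)) := by
          intro a b hab
          have h1 : (2 : ℂ) * a = 2 * b := add_left_cancel hab
          have h2 : (a : ℂ) = b := mul_left_cancel₀ two_ne_zero h1
          exact_mod_cast h2
        have hli := Module.End.eigenvectors_linearIndependent' H
          (fun m : ℕ => μ₀ + 2 * (m : ℂ)) hinj (fun m => (X ^ m) v₀)
          (fun m => ⟨sl2aux_pow_up hHX hv₀.1 m, hcon m⟩)
        have := hli.finite
        exact not_finite ℕ
      set m := Nat.find hex with hm_def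
      have hm0 : m ≠ 0 := by
        intro h
        have hspec := Nat.find_spec hex
        rw [← hm_def, h] at hspec
        simp at hspec
        exact hv₀.2 hspec
      obtain ⟨m', hm'⟩ := Nat.exists_eq_succ_of_ne_zero hm0
      set u := (X ^ m') v₀ with hu_def
      have hu_ne : u ≠ 0 := Nat.find_min hex (by omega)
      have hXu : X u = 0 := by
        have hspec := Nat.find_spec hex
        rw [← hm_def, hm'] at hspec
        rw [hu_def, ← Module.End.mul_apply, ← pow_succ']
        exact hspec
      have hu_mem : u ∈ Module.End.eigenspace H (μ₀ + 2 * (m' : ℂ)) :=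
        sl2aux_pow_up hHX hv₀.1 m'
      have t : IsSl2Triple H X Y := by
        refine ⟨hH0, ?_, ?_, ?_⟩
        · rw [Ring.lie_def, hXY]
        · rw [Ring.lie_def, hHX, ← Nat.cast_smul_eq_nsmul ℂ]
          norm_num
        · rw [Ring.lie_def, hHY, ← Nat.cast_smul_eq_nsmul ℂ]
          norm_num
      have P : t.HasPrimitiveVectorWith u (μ₀ + 2 * (m' : ℂ)) := by
        refine ⟨hu_ne, ?_, ?_⟩
        · rw [Module.End.lie_apply]
          exact Module.End.mem_eigenspace_iff.mp hu_mem
        · rw [Module.End.lie_apply, hXu]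
      obtain ⟨n, hn⟩ := P.exists_nat
      have htoEnd : LieModule.toEnd ℂ (Module.End ℂ V) V Y = Y := by ext w; rfl
      have hg_ne : ∀ i : ℕ, i ≤ n → (Y ^ i) u ≠ 0 := fun i hi => by
        have h := P.pow_toEnd_f_ne_zero_of_eq_nat hn hi
        rwa [htoEnd] at h
      have hgn1 : (Y ^ (n + 1)) u = 0 := by
        have h := P.pow_toEnd_f_eq_zero_of_eq_nat hn
        rwa [htoEnd] at h
      have hgH : ∀ i : ℕ, H ((Y ^ i) u) = ((n : ℂ) - 2 * i) • (Y ^ i) u := fun i => by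
        have h := P.lie_h_pow_toEnd_f i
        rw [htoEnd, Module.End.lie_apply, hn] at h
        exact h
      have hgX : ∀ i : ℕ, X ((Y ^ (i + 1)) u) = (((i : ℂ) + 1) * ((n : ℂ) - i)) • (Y ^ i) u :=
        fun i => by
          have h := P.lie_e_pow_succ_toEnd_f i
          rw [htoEnd, Module.End.lie_apply, hn] at h
          exact h
      set g : Fin (n + 1) → V := fun i => (Y ^ (i : ℕ)) u with hg_def
      set W : Submodule ℂ V := Submodule.span ℂ (Set.range g) with hW_def
      have hgW : ∀ i, g i ∈ W := fun i => Submodule.subset_span ⟨i, rfl⟩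
      have hWH : W ≤ W.comap H := by
        rw [hW_def, Submodule.span_le]
        rintro _ ⟨i, rfl⟩
        simp only [Set.mem_preimage, SetLike.mem_coe, Submodule.mem_comap]
        show H ((Y ^ (i : ℕ)) u) ∈ W
        rw [hgH]
        exact W.smul_mem _ (hgW i)
      have hWY : W ≤ W.comap Y := by
        rw [hW_def, Submodule.span_le]
        rintro _ ⟨i, rfl⟩
        simp only [Set.mem_preimage, SetLike.mem_coe, Submodule.mem_comap]
        show Y ((Y ^ (i : ℕ)) u) ∈ W
        rw [← Module.End.mul_apply, ← pow_succ']
        rcases eq_or_lt_of_le (Nat.lt_succ_iff.mp i.isLt) with h | h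
        · rw [h, hgn1]; exact W.zero_mem
        · exact hgW ⟨(i : ℕ) + 1, by omega⟩
      have hWX : W ≤ W.comap X := by
        rw [hW_def, Submodule.span_le]
        rintro _ ⟨i, rfl⟩
        simp only [Set.mem_preimage, SetLike.mem_coe, Submodule.mem_comap]
        show X ((Y ^ (i : ℕ)) u) ∈ W
        rcases i with ⟨iv, hiv⟩
        match iv with
        | 0 => simpa using (hXu ▸ W.zero_mem : X u ∈ W)
        | j + 1 =>
          rw [show ((⟨j + 1, hiv⟩ : Fin (n + 1)) : ℕ) = j + 1 from rfl, hgX j]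
          exact W.smul_mem _ (hgW ⟨j, by omega⟩)
      have hli : LinearIndependent ℂ g := by
        refine Module.End.eigenvectors_linearIndependent' H
          (fun i : Fin (n + 1) => (n : ℂ) - 2 * (i : ℕ)) ?_ g
          (fun i => ⟨Module.End.mem_eigenspace_iff.mpr (hgH i), hg_ne i i.is_le⟩)
        intro a b hab
        have h1 : (2 : ℂ) * ((a : ℕ) : ℂ) = 2 * ((b : ℕ) : ℂ) := by
          have h0 := sub_right_injective hab
          linear_combination h0
        have h2 : ((a : ℕ) : ℂ) = ((b : ℕ) : ℂ) := mul_left_cancel₀ two_ne_zero h1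
        exact Fin.ext (by exact_mod_cast h2)
      -- quotient by W and apply induction hypothesis
      have hWne : W ≠ ⊥ := by
        intro hbot
        apply hu_ne
        have h0 : g ⟨0, by omega⟩ ∈ W := hgW _
        rw [hbot, Submodule.mem_bot] at h0
        simpa [hg_def] using h0
      have hrank' : Module.finrank ℂ (V ⧸ W) ≤ N := by
        have h1 := Submodule.finrank_quotient_add_finrank W
        have h2 : 0 < Module.finrank ℂ W := by
          rcases Nat.eq_zero_or_pos (Module.finrank ℂ W) with h | h
          · exact absurd (Submodule.finrank_eq_zero.mp h) hWne
          · exact h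
        omega
      set H' := W.mapQ W H hWH with hH'
      set X' := W.mapQ W X hWX with hX'
      set Y' := W.mapQ W Y hWY with hY'
      have hmk : ∀ (f : Module.End ℂ V) (hf : W ≤ W.comap f) (x : V),
          (W.mapQ W f hf) (W.mkQ x) = W.mkQ (f x) := fun f hf x => by
        simp [Submodule.mapQ_apply, Submodule.mkQ_apply]
      have rel : ∀ (f₁ f₂ f₃ : Module.End ℂ V) (h₁ : W ≤ W.comap f₁) (h₂ : W ≤ W.comap f₂)
          (h₃ : W ≤ W.comap f₃) (c : ℂ), f₁ * f₂ - f₂ * f₁ = c • f₃ →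
          (W.mapQ W f₁ h₁) * (W.mapQ W f₂ h₂) - (W.mapQ W f₂ h₂) * (W.mapQ W f₁ h₁)
            = c • (W.mapQ W f₃ h₃) := by
        intro f₁ f₂ f₃ h₁ h₂ h₃ c hc
        apply Submodule.linearMap_qext
        ext x
        have hx := congrArg (fun f : Module.End ℂ V => f x) hc
        simp only [LinearMap.sub_apply, Module.End.mul_apply, LinearMap.smul_apply] at hx
        simp only [LinearMap.comp_apply, LinearMap.sub_apply, Module.End.mul_apply,
          LinearMap.smul_apply, hmk]
        rw [← map_smul, ← hx, map_sub]
      have rel1 : H' * X' - X' * H' = (2 : ℂ) • X' := rel H X X hWH hWX hWX 2 hHX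
      have rel2 : H' * Y' - Y' * H' = (-2 : ℂ) • Y' := rel H Y Y hWH hWY hWY (-2) hHY
      have rel3 : X' * Y' - Y' * X' = H' := by
        have := rel X Y H hWX hWY hWH 1 (by rw [hXY, one_smul])
        rwa [one_smul] at this
      have hmem' : W.mkQ v ∈ Module.End.eigenspace H' (l : ℂ) := by
        rw [Module.End.mem_eigenspace_iff, hH', hmk, Module.End.mem_eigenspace_iff.mp hv,
          map_smul]
      have hY0' : (Y' ^ l) (W.mkQ v) = 0 := by
        rw [hY', sl2aux_mapQ_pow, hYl, map_zero]
      have hq : W.mkQ v = 0 := ih (V ⧸ W) H' X' Y' rel1 rel2 rel3 hrank' l hl (W.mkQ v) hmem' hY0'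
      have hvW : v ∈ W := by
        rwa [Submodule.mkQ_apply, Submodule.Quotient.mk_eq_zero] at hq
      -- final computation inside W
      rw [hW_def] at hvW
      obtain ⟨c, hc⟩ := (Submodule.mem_span_range_iff_exists_fun ℂ).mp hvW
      have hHv : H v = (l : ℂ) • v := Module.End.mem_eigenspace_iff.mp hv
      have hsum : ∑ i, (c i * ((n : ℂ) - 2 * (i : ℕ) - l)) • g i = 0 := by
        have h1 : H v = ∑ i, (c i * ((n : ℂ) - 2 * (i : ℕ))) • g i := by
          rw [← hc, map_sum]
          refine Finset.sum_congr rfl fun i _ => ?_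
          rw [map_smul]
          show c i • H ((Y ^ (i : ℕ)) u) = _
          rw [hgH, smul_smul]
        have h2 : (l : ℂ) • v = ∑ i, (c i * (l : ℂ)) • g i := by
          rw [← hc, Finset.smul_sum]
          refine Finset.sum_congr rfl fun i _ => ?_
          rw [smul_smul, mul_comm]
        calc ∑ i, (c i * ((n : ℂ) - 2 * (i : ℕ) - l)) • g i
            = ∑ i, ((c i * ((n : ℂ) - 2 * (i : ℕ))) • g i - (c i * (l : ℂ)) • g i) := by
              refine Finset.sum_congr rfl fun i _ => ?_
              rw [← sub_smul]; ring_nf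
          _ = H v - (l : ℂ) • v := by rw [Finset.sum_sub_distrib, ← h1, ← h2]
          _ = 0 := by rw [hHv, sub_self]
      have hrel : ∀ i, c i * ((n : ℂ) - 2 * (i : ℕ) - l) = 0 :=
        Fintype.linearIndependent_iff.mp hli _ hsum
      have hkey : ∀ i : Fin (n + 1), c i ≠ 0 → n = 2 * (i : ℕ) + l := by
        intro i hci
        rcases mul_eq_zero.mp (hrel i) with h | h
        · exact absurd h hci
        · have h3 : (n : ℂ) = ((2 * (i : ℕ) + l : ℕ) : ℂ) := by
            push_cast
            linear_combination h
          exact_mod_cast h3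
      have hc0 : ∀ i, c i = 0 := by
        intro i
        by_contra hci
        have hni := hkey i hci
        have hYv : (Y ^ l) v = ∑ j, c j • (Y ^ (l + (j : ℕ))) u := by
          rw [← hc, map_sum]
          refine Finset.sum_congr rfl fun j _ => ?_
          rw [map_smul]
          show c j • (Y ^ l) ((Y ^ (j : ℕ)) u) = _
          rw [← Module.End.mul_apply, ← pow_add]
        have hsingle : (Y ^ l) v = c i • (Y ^ (l + (i : ℕ))) u := by
          rw [hYv]
          refine Finset.sum_eq_single i (fun j _ hj => ?_) (by simp)
          rcases eq_or_ne (c j) 0 with h | h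
          · rw [h, zero_smul]
          · have hnj := hkey j h
            exact absurd (Fin.ext (by omega : (j : ℕ) = (i : ℕ))) hj
        rw [hYl] at hsingle
        have hle : l + (i : ℕ) ≤ n := by omega
        have hnz := hg_ne _ hle
        rcases smul_eq_zero.mp hsingle.symm with h | h
        · exact hci h
        · exact hnz h
      rw [← hc]
      simp [hc0]

/-- For a finite-dimensional representation of sl₂(ℂ) (given by operators H, X, Y
with the standard commutation relations), for every integer λ > 0 the map
Y^λ : V_λ → V_{−λ} is a linear isomorphism (a bijection), where V_λ is the
λ-eigenspace of H. -/
theorem sl2_Y_pow_bijective (V : Type*) [AddCommGroup V] [Module ℂ V]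
    [FiniteDimensional ℂ V]
    (H X Y : Module.End ℂ V)
    (hHX : H * X - X * H = (2 : ℂ) • X)
    (hHY : H * Y - Y * H = (-2 : ℂ) • Y)
    (hXY : X * Y - Y * X = H)
    (l : ℕ) (hl : 0 < l) :
    Set.BijOn (Y ^ l) (Module.End.eigenspace H (l : ℂ) : Set V)
      (Module.End.eigenspace H (-(l : ℂ)) : Set V) := by
  have hmaps : ∀ v ∈ Module.End.eigenspace H (l : ℂ),
      (Y ^ l) v ∈ Module.End.eigenspace H (-(l : ℂ)) := by
    intro v hv
    have h := sl2aux_pow_down hHY hv l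
    have he : (l : ℂ) - 2 * l = -(l : ℂ) := by ring
    rwa [he] at h
  -- flipped relations for X
  have hHY' : (-H) * Y - Y * (-H) = (2 : ℂ) • Y := by
    rw [neg_mul, mul_neg, neg_sub_neg, ← neg_sub, hHY]; module
  have hHX' : (-H) * X - X * (-H) = (-2 : ℂ) • X := by
    rw [neg_mul, mul_neg, neg_sub_neg, ← neg_sub, hHX]; module
  have hYX' : Y * X - X * Y = -H := by rw [← neg_sub (X * Y) (Y * X), hXY]
  have hes : ∀ w : V, w ∈ Module.End.eigenspace (-H) (l : ℂ) ↔
      w ∈ Module.End.eigenspace H (-(l : ℂ)) := by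
    intro w
    rw [Module.End.mem_eigenspace_iff, Module.End.mem_eigenspace_iff, LinearMap.neg_apply,
      neg_eq_iff_eq_neg, neg_smul]
  have hinj1 : ∀ v ∈ Module.End.eigenspace H (l : ℂ), (Y ^ l) v = 0 → v = 0 :=
    sl2aux_key (Module.finrank ℂ V) V H X Y hHX hHY hXY le_rfl l hl
  have hinj2 : ∀ v ∈ Module.End.eigenspace H (-(l : ℂ)), (X ^ l) v = 0 → v = 0 := by
    intro v hv
    exact sl2aux_key (Module.finrank ℂ V) V (-H) Y X hHY' hHX' hYX' le_rfl l hl v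
      ((hes v).mpr hv)
  have hmaps2 : ∀ v ∈ Module.End.eigenspace H (-(l : ℂ)),
      (X ^ l) v ∈ Module.End.eigenspace H (l : ℂ) := by
    intro v hv
    have h := sl2aux_pow_up hHX hv l
    have he : -(l : ℂ) + 2 * l = (l : ℂ) := by ring
    rwa [he] at h
  set p := Module.End.eigenspace H (l : ℂ) with hp
  set q := Module.End.eigenspace H (-(l : ℂ)) with hq
  set A : p →ₗ[ℂ] q := (Y ^ l).restrict hmaps with hA
  set B : q →ₗ[ℂ] p := (X ^ l).restrict hmaps2 with hB
  have hAinj : Function.Injective A := by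
    intro x y hxy
    have h1 : (Y ^ l) (x : V) = (Y ^ l) (y : V) := congrArg Subtype.val hxy
    have h2 : (Y ^ l) ((x : V) - (y : V)) = 0 := by rw [map_sub, h1, sub_self]
    have h3 : (x : V) - (y : V) = 0 := hinj1 _ (sub_mem x.2 y.2) h2
    exact Subtype.ext (sub_eq_zero.mp h3)
  have hBinj : Function.Injective B := by
    intro x y hxy
    have h1 : (X ^ l) (x : V) = (X ^ l) (y : V) := congrArg Subtype.val hxy
    have h2 : (X ^ l) ((x : V) - (y : V)) = 0 := by rw [map_sub, h1, sub_self]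
    have h3 : (x : V) - (y : V) = 0 := hinj2 _ (sub_mem x.2 y.2) h2
    exact Subtype.ext (sub_eq_zero.mp h3)
  have e1 : Module.finrank ℂ p ≤ Module.finrank ℂ q :=
    LinearMap.finrank_le_finrank_of_injective hAinj
  have e2 : Module.finrank ℂ q ≤ Module.finrank ℂ p :=
    LinearMap.finrank_le_finrank_of_injective hBinj
  have heq : Module.finrank ℂ p = Module.finrank ℂ q := le_antisymm e1 e2
  have hAsurj : Function.Surjective A :=
    (LinearMap.injective_iff_surjective_of_finrank_eq_finrank heq).mp hAinj
  refine ⟨fun v hv => hmaps v hv, fun a ha b hb hab => ?_, fun w hw => ?_⟩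
  · have h2 : (Y ^ l) (a - b) = 0 := by
      rw [map_sub, hab, sub_self]
    exact sub_eq_zero.mp (hinj1 _ (sub_mem ha hb) h2)
  · obtain ⟨x, hx⟩ := hAsurj ⟨w, hw⟩
    refine ⟨(x : V), x.2, ?_⟩
    have := congrArg Subtype.val hx
    simpa [hA, LinearMap.restrict_apply] using this
end

section
/- Fix positive integers k, d and let 1 ≤ n ≤ dk. Define the weighted incidence matrix A_{k,d,n}, with rows indexed by partitions μ of n−1 into at most d parts each at most k and columns indexed by partitions λ of n into at most d parts each at most k, by: the (μ,λ)-entry is e_i if μ = (k^{e_k},...,1^{e_1},0^{e_0}) and λ is obtained from μ by replacing one part equal to i by i+1, and 0 otherwise. Then A_{k,d,n} has full rank: its rank equals min(p(k,d,n−1), p(k,d,n)). -/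
/-- Partitions of `n` into at most `d` parts, each part at most `k`. -/
def RP (k d n : ℕ) : Type :=
  {P : Nat.Partition n // P.parts.card ≤ d ∧ ∀ i ∈ P.parts, i ≤ k}

instance (k d n : ℕ) : Fintype (RP k d n) :=
  Subtype.fintype _

/-- The weighted incidence matrix `A_{k,d,n}`: rows are indexed by partitions `μ`
of `n−1` (at most `d` parts, each at most `k`), columns by partitions `λ` of `n`;
the `(μ,λ)` entry is the multiplicity `e_i` of the part `i` in `μ` (where the
part `0` has multiplicity `d` minus the number of positive parts) if `λ` is
obtained from `μ` by replacing one part equal to `i` by `i+1`, and `0` otherwise. -/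
def Amat (k d n : ℕ) : Matrix (RP k d (n - 1)) (RP k d n) ℚ :=
  fun μ lam =>
    (if lam.1.parts = 1 ::ₘ μ.1.parts then ((d : ℚ) - μ.1.parts.card) else 0)
      + ∑ i ∈ Finset.Icc 1 (k - 1),
          if lam.1.parts = (i + 1) ::ₘ μ.1.parts.erase i then
            (μ.1.parts.count i : ℚ) else 0

open Multiset Finset Matrix



def Occ (k d n : ℕ) : Type :=
  {t : Multiset ℕ // Multiset.card t = d ∧ t.sum = n ∧ ∀ x ∈ t, x ≤ k}

def occEquiv (k d n : ℕ) : RP k d n ≃ Occ k d n where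
  toFun s := ⟨s.1.parts + Multiset.replicate (d - Multiset.card s.1.parts) 0, by
      constructor
      · rw [Multiset.card_add, Multiset.card_replicate]
        have := s.2.1; omega
      constructor
      · rw [Multiset.sum_add, Multiset.sum_replicate, smul_zero, add_zero, s.1.parts_sum]
      · intro x hx
        rcases Multiset.mem_add.mp hx with h | h
        · exact s.2.2 x h
        · rw [Multiset.eq_of_mem_replicate h]; exact Nat.zero_le k⟩
  invFun t := ⟨⟨t.1.filter (fun x => 0 < x), by
      intro x hx; exact (Multiset.mem_filter.mp hx).2, by
      have hsplit := Multiset.filter_add_not (fun x => 0 < x) t.1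
      have hz : (t.1.filter (fun x => ¬ 0 < x)).sum = 0 :=
        Multiset.sum_eq_zero (fun x hx => by
          have := (Multiset.mem_filter.mp hx).2; omega)
      have : (t.1.filter (fun x => 0 < x)).sum + (t.1.filter (fun x => ¬ 0 < x)).sum = t.1.sum := by
        rw [← Multiset.sum_add, hsplit]
      rw [hz, add_zero] at this
      rw [this, t.2.2.1]⟩, by
      constructor
      · have := Multiset.card_le_card (Multiset.filter_le (fun x => 0 < x) t.1)
        rw [t.2.1] at this; exact this
      · intro i hi; exact t.2.2.2 i (Multiset.mem_of_mem_filter hi)⟩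
  left_inv s := by
    apply Subtype.ext
    apply Nat.Partition.ext
    simp only
    rw [Multiset.filter_add]
    have h1 : s.1.parts.filter (fun x => 0 < x) = s.1.parts :=
      Multiset.filter_eq_self.mpr (fun a ha => s.1.parts_pos ha)
    have h2 : (Multiset.replicate (d - Multiset.card s.1.parts) 0).filter (fun x => 0 < x) = 0 :=
      Multiset.filter_eq_nil.mpr (fun a ha => by
        rw [Multiset.eq_of_mem_replicate ha]; omega)
    rw [h1, h2, add_zero]
  right_inv t := by
    apply Subtype.ext
    simp only
    have hsplit := Multiset.filter_add_not (fun x => 0 < x) t.1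
    have hz : t.1.filter (fun x => ¬ 0 < x)
        = Multiset.replicate (Multiset.card (t.1.filter (fun x => ¬ 0 < x))) 0 := by
      rw [Multiset.eq_replicate_card]
      intro b hb
      have := (Multiset.mem_filter.mp hb).2; omega
    have hcard : Multiset.card (t.1.filter (fun x => 0 < x))
        + Multiset.card (t.1.filter (fun x => ¬ 0 < x)) = d := by
      rw [← Multiset.card_add, hsplit, t.2.1]
    have : d - Multiset.card (t.1.filter (fun x => 0 < x))
        = Multiset.card (t.1.filter (fun x => ¬ 0 < x)) := by omega
    rw [this, ← hz, hsplit]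

instance (k d n : ℕ) : Fintype (Occ k d n) := Fintype.ofEquiv _ (occEquiv k d n)

lemma card_occ (k d n : ℕ) : Fintype.card (Occ k d n) = p k d n := by
  rw [← Fintype.card_congr (occEquiv k d n)]
  rw [p, ← Fintype.card_subtype]
  rfl


instance (k d n : ℕ) : DecidableEq (Occ k d n) := fun a b =>
  decidable_of_iff (a.1 = b.1) Subtype.ext_iff.symm

def bump (s : Multiset ℕ) (i : ℕ) : Multiset ℕ := (i+1) ::ₘ s.erase i

lemma count_bump' {i : ℕ} {t : Multiset ℕ} (hib : i ∈ t) (a : ℕ) :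
    count a (bump t i) + (if a = i then 1 else 0)
      = count a t + (if a = i+1 then 1 else 0) := by
  unfold bump
  by_cases h1 : a = i+1
  · subst h1
    have : i + 1 ≠ i := by omega
    simp [count_cons, this, Multiset.count_erase_of_ne this]
  · by_cases h2 : a = i
    · subst h2
      have hc : 1 ≤ count a t := one_le_count_iff_mem.mpr hib
      simp [count_cons, h1, Multiset.count_erase_self]
      omega
    · simp [count_cons, h1, h2, Multiset.count_erase_of_ne h2]

lemma mem_bump_self {i : ℕ} (t : Multiset ℕ) : i + 1 ∈ bump t i := mem_cons_self _ _

lemma sum_bump {i : ℕ} {t : Multiset ℕ} (hib : i ∈ t) : (bump t i).sum = t.sum + 1 := by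
  unfold bump
  rw [Multiset.sum_cons]
  have := Multiset.cons_erase hib
  have h2 : t.sum = i + (t.erase i).sum := by
    conv_lhs => rw [← this]
    rw [Multiset.sum_cons]
  omega

lemma card_bump {i : ℕ} {t : Multiset ℕ} (hib : i ∈ t) :
    Multiset.card (bump t i) = Multiset.card t := by
  unfold bump
  rw [Multiset.card_cons, Multiset.card_erase_of_mem hib]
  have h1 : 1 ≤ Multiset.card t := by
    rw [← Multiset.card_singleton i]
    exact Multiset.card_le_card (Multiset.singleton_le.mpr hib)
  exact Nat.succ_pred_eq_of_pos h1

lemma mem_bump_le {i k : ℕ} {t : Multiset ℕ} (hik : i < k) (ht : ∀ x ∈ t, x ≤ k) :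
    ∀ x ∈ bump t i, x ≤ k := by
  intro x hx
  rcases Multiset.mem_cons.mp hx with rfl | hx
  · omega
  · exact ht x (Multiset.mem_of_mem_erase hx)

lemma drop_bump {i : ℕ} {ρ : Multiset ℕ} (hi : i ∈ ρ) {μ : Multiset ℕ}
    (h : μ = bump ρ i) : ρ = i ::ₘ μ.erase (i+1) := by
  subst h
  unfold bump
  rw [Multiset.erase_cons_head, Multiset.cons_erase hi]

lemma bump_inj {i : ℕ} {s t : Multiset ℕ} (hs : i ∈ s) (ht : i ∈ t)
    (h : bump s i = bump t i) : s = t := by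
  unfold bump at h
  have h2 := (Multiset.cons_inj_right (i+1)).mp h
  rw [← Multiset.cons_erase hs, ← Multiset.cons_erase ht, h2]

lemma count_bump_mem {i a : ℕ} {t : Multiset ℕ} (hib : i ∈ t) (ha : a ∈ bump t i) :
    a ∈ t ∨ a = i + 1 := by
  rcases Multiset.mem_cons.mp ha with rfl | h
  · right; rfl
  · left; exact Multiset.mem_of_mem_erase h

lemma bump_comm {i j : ℕ} {ρ : Multiset ℕ} (hi : i ∈ ρ) (hj : j ∈ ρ) (hij : i ≠ j) :
    bump (bump ρ j) i = bump (bump ρ i) j := by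
  have hibj : i ∈ bump ρ j := by
    rw [← count_pos]
    have := count_bump' hj i
    have hci : 1 ≤ count i ρ := one_le_count_iff_mem.mpr hi
    split_ifs at this <;> omega
  have hjbi : j ∈ bump ρ i := by
    rw [← count_pos]
    have := count_bump' hi j
    have hcj : 1 ≤ count j ρ := one_le_count_iff_mem.mpr hj
    split_ifs at this <;> omega
  ext a
  have h1 := count_bump' hibj a
  have h2 := count_bump' hj a
  have h3 := count_bump' hjbi a
  have h4 := count_bump' hi a
  split_ifs at h1 h2 h3 h4 <;> omega

def Nw (k i : ℕ) : ℕ := i.factorial * Nat.descFactorial k i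

lemma Nw_pos {k i : ℕ} (h : i ≤ k) : 0 < Nw k i :=
  Nat.mul_pos i.factorial_pos (Nat.pos_of_ne_zero (fun hz => by have := Nat.descFactorial_eq_zero_iff_lt.mp hz; omega))

lemma Nw_succ {k i : ℕ} (h : i < k) : Nw k (i+1) = Nw k i * ((i+1) * (k - i)) := by
  unfold Nw
  rw [Nat.factorial_succ, Nat.descFactorial_succ]
  ring

def Pval (k : ℕ) (t : Multiset ℕ) : ℚ :=
  ∏ c ∈ Finset.range (k+1), ((Nw k c : ℚ) ^ (count c t) * (count c t).factorial)

lemma Pval_pos (k : ℕ) (t : Multiset ℕ) : 0 < Pval k t := by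
  apply Finset.prod_pos
  intro c hc
  have : 0 < Nw k c := Nw_pos (by simpa using Nat.lt_succ_iff.mp (Finset.mem_range.mp hc))
  positivity

lemma Pval_ne (k : ℕ) (t : Multiset ℕ) : Pval k t ≠ 0 := ne_of_gt (Pval_pos k t)

lemma pval_bump {k i : ℕ} {t : Multiset ℕ} (hik : i < k) (hi : i ∈ t) :
    Pval k (bump t i) * (count i t)
      = Pval k t * (((i+1) * (k - i) : ℕ) : ℚ) * ((count (i+1) t : ℚ) + 1) := by
  classical
  set S := Finset.range (k+1) with hS
  have hiS : i ∈ S := Finset.mem_range.mpr (by omega)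
  have hi1S : i + 1 ∈ S.erase i := Finset.mem_erase.mpr ⟨by omega, Finset.mem_range.mpr (by omega)⟩
  set f : ℕ → ℚ := fun c => (Nw k c : ℚ) ^ (count c t) * (count c t).factorial with hf
  set g : ℕ → ℚ := fun c => (Nw k c : ℚ) ^ (count c (bump t i)) * (count c (bump t i)).factorial with hg
  have hfp : Pval k t = f i * (f (i+1) * ∏ c ∈ (S.erase i).erase (i+1), f c) := by
    rw [Pval, ← Finset.mul_prod_erase S f hiS, ← Finset.mul_prod_erase _ f hi1S]
  have hgp : Pval k (bump t i) = g i * (g (i+1) * ∏ c ∈ (S.erase i).erase (i+1), g c) := by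
    rw [Pval, ← Finset.mul_prod_erase S g hiS, ← Finset.mul_prod_erase _ g hi1S]
  have hrest : ∏ c ∈ (S.erase i).erase (i+1), g c = ∏ c ∈ (S.erase i).erase (i+1), f c := by
    apply Finset.prod_congr rfl
    intro c hc
    have hc1 : c ≠ i + 1 := (Finset.mem_erase.mp hc).1
    have hc2 : c ≠ i := (Finset.mem_erase.mp (Finset.mem_erase.mp hc).2).1
    have := count_bump' hi c
    simp only [if_neg hc1, if_neg hc2, add_zero] at this
    rw [hg, hf]
    simp only [this]
  obtain ⟨e1, he1⟩ : ∃ e1, count i t = e1 + 1 :=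
    ⟨count i t - 1, by have := one_le_count_iff_mem.mpr hi; omega⟩
  have hci : count i (bump t i) = e1 := by
    have := count_bump' hi i
    simp only [if_neg (by omega : i ≠ i + 1), add_zero] at this
    simp at this
    omega
  have hci1 : count (i+1) (bump t i) = count (i+1) t + 1 := by
    have := count_bump' hi (i+1)
    simp only [if_neg (by omega : i + 1 ≠ i), add_zero] at this
    simp at this
    omega
  rw [hgp, hfp, hrest]
  set R := ∏ c ∈ (S.erase i).erase (i+1), f c
  rw [hf, hg]
  simp only [hci, hci1, he1]
  have hnw : ((Nw k (i+1) : ℕ) : ℚ) = (Nw k i : ℚ) * (((i+1) * (k - i) : ℕ) : ℚ) := by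
    rw [← Nat.cast_mul, Nw_succ hik]
  rw [hnw]
  push_cast [Nat.factorial_succ, pow_succ]
  ring

def okm (k d N : ℕ) (t : Multiset ℕ) : Prop :=
  Multiset.card t = d ∧ t.sum = N ∧ ∀ x ∈ t, x ≤ k

instance (k d N : ℕ) (t : Multiset ℕ) : Decidable (okm k d N t) := by
  unfold okm; infer_instance

def Fm (k d m : ℕ) : Matrix (Occ k d (m+1)) (Occ k d m) ℚ :=
  fun l μ => ∑ i ∈ Finset.range k, if l.1 = bump μ.1 i then (count i μ.1 : ℚ) else 0

def Pd (k d n : ℕ) : Matrix (Occ k d n) (Occ k d n) ℚ :=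
  Matrix.diagonal (fun μ => Pval k μ.1)

def Pdinv (k d n : ℕ) : Matrix (Occ k d n) (Occ k d n) ℚ :=
  Matrix.diagonal (fun μ : Occ k d n => (Pval k μ.1)⁻¹)

lemma sum_occ_eq (k d N : ℕ) (t : Multiset ℕ) (g : Multiset ℕ → ℚ) :
    (∑ l : Occ k d N, if l.1 = t then g l.1 else 0)
      = if okm k d N t then g t else 0 := by
  by_cases h : okm k d N t
  · rw [if_pos h]
    obtain ⟨e, he⟩ : ∃ e : Occ k d N, e.1 = t := ⟨⟨t, h.1, h.2.1, h.2.2⟩, rfl⟩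
    refine (Finset.sum_eq_single_of_mem e (Finset.mem_univ e) ?_).trans (by simp [he])
    intro b _ hb
    rw [if_neg]
    intro hbt
    exact hb (Subtype.ext (by rw [hbt, he]))
  · rw [if_neg h]
    apply Finset.sum_eq_zero
    intro l _
    rw [if_neg]
    intro hlt
    exact h (hlt ▸ ⟨l.2.1, l.2.2.1, l.2.2.2⟩)

def CovT (k d m : ℕ) (μ ν : Occ k d (m+1)) (i j : ℕ) : ℚ :=
  if bump μ.1 i = bump ν.1 j ∧ okm k d (m+2) (bump μ.1 i) then
    (count i μ.1 : ℚ) * Pval k (bump μ.1 i) * (count j ν.1 : ℚ) else 0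

noncomputable def CocT (k d m : ℕ) (μ ν : Occ k d (m+1)) (i j : ℕ) : ℚ :=
  ∑ ρ : Occ k d m,
    (if μ.1 = bump ρ.1 i ∧ ν.1 = bump ρ.1 j then
      (count i ρ.1 : ℚ) * (count j ρ.1 : ℚ) * (Pval k μ.1 * Pval k ν.1 * (Pval k ρ.1)⁻¹) else 0)

lemma sum_mul_aux (P : ℚ) (A B : ℕ → ℚ) (s : Finset ℕ) :
    (∑ i ∈ s, A i) * P * (∑ j ∈ s, B j) = ∑ i ∈ s, ∑ j ∈ s, A i * P * B j := by
  rw [Finset.sum_mul, Finset.sum_mul_sum]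

lemma lhs_entry (k d m : ℕ) (μ ν : Occ k d (m+1)) :
    ((Fm k d (m+1))ᵀ * Pd k d (m+2) * Fm k d (m+1)) μ ν
      = ∑ i ∈ Finset.range k, ∑ j ∈ Finset.range k, CovT k d m μ ν i j := by
  have step1 : ((Fm k d (m+1))ᵀ * Pd k d (m+2) * Fm k d (m+1)) μ ν
      = ∑ l : Occ k d (m+2), Fm k d (m+1) l μ * Pval k l.1 * Fm k d (m+1) l ν := by
    rw [Matrix.mul_apply]
    simp only [Pd, Matrix.mul_diagonal, Matrix.transpose_apply]
  rw [step1]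
  have step2 : ∀ l : Occ k d (m+2), Fm k d (m+1) l μ * Pval k l.1 * Fm k d (m+1) l ν
      = ∑ i ∈ Finset.range k, ∑ j ∈ Finset.range k,
          (if l.1 = bump μ.1 i then (if l.1 = bump ν.1 j then
            (count i μ.1 : ℚ) * Pval k l.1 * (count j ν.1 : ℚ) else 0) else 0) := by
    intro l
    unfold Fm
    rw [sum_mul_aux]
    apply Finset.sum_congr rfl
    intro i _
    apply Finset.sum_congr rfl
    intro j _
    split_ifs <;> ring
  rw [Finset.sum_congr rfl (fun l _ => step2 l)]
  rw [Finset.sum_comm]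
  apply Finset.sum_congr rfl
  intro i _
  rw [Finset.sum_comm]
  apply Finset.sum_congr rfl
  intro j _
  have hcollapse := sum_occ_eq k d (m+2) (bump μ.1 i)
    (fun s => if s = bump ν.1 j then (count i μ.1 : ℚ) * Pval k s * (count j ν.1 : ℚ) else 0)
  rw [hcollapse]
  unfold CovT
  by_cases h1 : okm k d (m+2) (bump μ.1 i) <;> by_cases h2 : bump μ.1 i = bump ν.1 j <;>
    simp [h1, h2]

lemma rhs_entry (k d m : ℕ) (μ ν : Occ k d (m+1)) :
    (((Fm k d m)ᵀ * Pd k d (m+1))ᵀ * Pdinv k d m * ((Fm k d m)ᵀ * Pd k d (m+1))) μ ν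
      = ∑ i ∈ Finset.range k, ∑ j ∈ Finset.range k, CocT k d m μ ν i j := by
  have step1 : (((Fm k d m)ᵀ * Pd k d (m+1))ᵀ * Pdinv k d m * ((Fm k d m)ᵀ * Pd k d (m+1))) μ ν
      = ∑ ρ : Occ k d m,
          (Fm k d m μ ρ) * ((Pval k μ.1 * Pval k ν.1 * (Pval k ρ.1)⁻¹)) * (Fm k d m ν ρ) := by
    rw [Matrix.mul_apply]
    simp only [Pd, Pdinv, Matrix.mul_diagonal, Matrix.transpose_apply]
    apply Finset.sum_congr rfl
    intro ρ _
    ring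
  rw [step1]
  have step2 : ∀ ρ : Occ k d m,
      (Fm k d m μ ρ) * ((Pval k μ.1 * Pval k ν.1 * (Pval k ρ.1)⁻¹)) * (Fm k d m ν ρ)
      = ∑ i ∈ Finset.range k, ∑ j ∈ Finset.range k,
          (if μ.1 = bump ρ.1 i ∧ ν.1 = bump ρ.1 j then
            (count i ρ.1 : ℚ) * (count j ρ.1 : ℚ)
              * (Pval k μ.1 * Pval k ν.1 * (Pval k ρ.1)⁻¹) else 0) := by
    intro ρ
    unfold Fm
    rw [sum_mul_aux]
    apply Finset.sum_congr rfl
    intro i _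
    apply Finset.sum_congr rfl
    intro j _
    by_cases hA : μ.1 = bump ρ.1 i
    · by_cases hB : ν.1 = bump ρ.1 j
      · simp only [if_pos hA, if_pos hB, if_pos (And.intro hA hB)]; ring
      · simp only [if_pos hA, if_neg hB, if_neg (fun h : _ ∧ _ => hB h.2), mul_zero, zero_mul]
    · simp only [if_neg hA, if_neg (fun h : _ ∧ _ => hA h.1), mul_zero, zero_mul]
  rw [Finset.sum_congr rfl (fun ρ _ => step2 ρ)]
  rw [Finset.sum_comm]
  apply Finset.sum_congr rfl
  intro i _
  rw [Finset.sum_comm]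
  apply Finset.sum_congr rfl
  intro j _
  rfl

/-! ### helper facts -/

lemma okm_bump {k d m : ℕ} (μ : Occ k d (m+1)) {i : ℕ} (hik : i < k) (hi : i ∈ μ.1) :
    okm k d (m+2) (bump μ.1 i) :=
  ⟨by rw [card_bump hi, μ.2.1], by rw [sum_bump hi, μ.2.2.1], mem_bump_le hik μ.2.2.2⟩

lemma bump_drop {j : ℕ} {s : Multiset ℕ} (hj1 : j+1 ∈ s) :
    bump (j ::ₘ s.erase (j+1)) j = s := by
  unfold bump; rw [Multiset.erase_cons_head, Multiset.cons_erase hj1]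

lemma okm_drop {k d m : ℕ} (μ : Occ k d (m+1)) {j : ℕ} (hjk : j < k) (hj1 : j+1 ∈ μ.1) :
    okm k d m (j ::ₘ μ.1.erase (j+1)) := by
  have hcard : Multiset.card μ.1 = d := μ.2.1
  have hsum : μ.1.sum = m + 1 := μ.2.2.1
  have hsum2 : (j+1) + (μ.1.erase (j+1)).sum = μ.1.sum := by
    conv_rhs => rw [← Multiset.cons_erase hj1]
    rw [Multiset.sum_cons]
  have hcard2 : Multiset.card (μ.1.erase (j+1)) + 1 = Multiset.card μ.1 := by
    rw [Multiset.card_erase_of_mem hj1]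
    have h0 : 0 < Multiset.card μ.1 := Multiset.card_pos_iff_exists_mem.mpr ⟨_, hj1⟩
    exact Nat.succ_pred_eq_of_pos h0
  refine ⟨?_, ?_, ?_⟩
  · rw [Multiset.card_cons]; omega
  · rw [Multiset.sum_cons]; omega
  · intro x hx
    rcases Multiset.mem_cons.mp hx with rfl | hx
    · omega
    · exact μ.2.2.2 x (Multiset.mem_of_mem_erase hx)

/-! ### diagonal terms -/

lemma cov_diag_ne {k d m : ℕ} {μ ν : Occ k d (m+1)} (hne : μ ≠ ν) (i : ℕ) :
    CovT k d m μ ν i i = 0 := by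
  unfold CovT
  split_ifs with h
  · by_cases hiμ : i ∈ μ.1
    · by_cases hiν : i ∈ ν.1
      · exact absurd (Subtype.ext (bump_inj hiμ hiν h.1)) hne
      · simp [Multiset.count_eq_zero.mpr hiν]
    · simp [Multiset.count_eq_zero.mpr hiμ]
  · rfl

lemma coc_diag_ne {k d m : ℕ} {μ ν : Occ k d (m+1)} (hne : μ ≠ ν) (i : ℕ) :
    CocT k d m μ ν i i = 0 := by
  unfold CocT
  apply Finset.sum_eq_zero
  intro ρ _
  rw [if_neg]
  rintro ⟨h1, h2⟩
  exact hne (Subtype.ext (h1.trans h2.symm))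

lemma cov_diag {k d m : ℕ} (μ : Occ k d (m+1)) {i : ℕ} (hik : i < k) :
    CovT k d m μ μ i i
      = Pval k μ.1 * (((i+1)*(k-i) : ℕ) : ℚ) * (count i μ.1 : ℚ)
          * ((count (i+1) μ.1 : ℚ) + 1) := by
  by_cases hi : i ∈ μ.1
  · unfold CovT
    rw [if_pos ⟨rfl, okm_bump μ hik hi⟩]
    have R := pval_bump hik hi
    linear_combination (count i μ.1 : ℚ) * R
  · unfold CovT
    have hc : count i μ.1 = 0 := Multiset.count_eq_zero.mpr hi
    split_ifs <;> simp [hc]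

lemma coc_diag {k d m : ℕ} (μ : Occ k d (m+1)) {i : ℕ} (hik : i < k) :
    CocT k d m μ μ i i
      = Pval k μ.1 * (((i+1)*(k-i) : ℕ) : ℚ) * ((count i μ.1 : ℚ) + 1)
          * (count (i+1) μ.1 : ℚ) := by
  by_cases h1 : i+1 ∈ μ.1
  · set r := i ::ₘ μ.1.erase (i+1) with hrdef
    have hokr := okm_drop μ hik h1
    have hμr : μ.1 = bump r i := (bump_drop h1).symm
    have hir : i ∈ r := Multiset.mem_cons_self _ _
    set ρ₀ : Occ k d m := ⟨r, hokr.1, hokr.2.1, hokr.2.2⟩ with hρ₀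
    have hcnt : ∀ a, count a μ.1 + (if a = i then 1 else 0)
        = count a r + (if a = i+1 then 1 else 0) := by
      intro a
      have := count_bump' hir a
      rw [← hμr] at this
      exact this
    have hci : count i r = count i μ.1 + 1 := by
      have := hcnt i
      simp only [if_neg (by omega : i ≠ i + 1)] at this
      simp at this
      omega
    have hci1 : count (i+1) r + 1 = count (i+1) μ.1 := by
      have := hcnt (i+1)
      simp only [if_neg (by omega : i + 1 ≠ i)] at this
      simp at this
      omega
    unfold CocT
    refine (Finset.sum_eq_single_of_mem ρ₀ (Finset.mem_univ _) ?_).trans ?_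
    · intro b _ hb
      by_cases hcnd : μ.1 = bump b.1 i
      · by_cases hcb : count i b.1 = 0
        · rw [if_pos ⟨hcnd, hcnd⟩, hcb]; simp
        · exfalso
          apply hb
          apply Subtype.ext
          rw [drop_bump (Multiset.count_pos.mp (by omega)) hcnd]
      · rw [if_neg (fun hh => hcnd hh.1)]
    · rw [if_pos ⟨hμr, hμr⟩]
      have R := pval_bump hik hir
      rw [← hμr] at R
      have hcast : (count i r : ℚ) = (count i μ.1 : ℚ) + 1 := by exact_mod_cast hci
      have hcast1 : (count (i+1) r : ℚ) + 1 = (count (i+1) μ.1 : ℚ) := by exact_mod_cast hci1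
      rw [hcast, hcast1] at R
      show (count i r : ℚ) * (count i r : ℚ)
          * (Pval k μ.1 * Pval k μ.1 * (Pval k r)⁻¹) = _
      rw [hcast]
      have hPr : Pval k r ≠ 0 := Pval_ne k r
      field_simp
      push_cast at R ⊢
      linear_combination (Pval k μ.1) * R
  · have hc : count (i+1) μ.1 = 0 := Multiset.count_eq_zero.mpr h1
    unfold CocT
    rw [Finset.sum_eq_zero, hc]
    · simp
    · intro ρ _
      rw [if_neg]
      rintro ⟨hμρ, -⟩
      exact h1 (hμρ ▸ mem_bump_self ρ.1)

/-! ### off-diagonal terms -/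

lemma cov_coc_off {k d m : ℕ} (μ ν : Occ k d (m+1)) {i j : ℕ}
    (hik : i < k) (hjk : j < k) (hij : i ≠ j) :
    CovT k d m μ ν i j = CocT k d m μ ν j i := by
  by_cases hC : bump μ.1 i = bump ν.1 j ∧ i ∈ μ.1 ∧ j ∈ ν.1
  · obtain ⟨hbb, hiμ, hjν⟩ := hC
    have hEQ : ∀ a, count a (bump μ.1 i) = count a (bump ν.1 j) := fun a => by rw [hbb]
    have e1 := count_bump' hiμ
    have e2 := count_bump' hjν
    have hciμ : 1 ≤ count i μ.1 := one_le_count_iff_mem.mpr hiμ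
    have hcjν : 1 ≤ count j ν.1 := one_le_count_iff_mem.mpr hjν
    have hj1μ : j+1 ∈ μ.1 := by
      rw [← Multiset.count_pos]
      have a1 := e1 (j+1); have a2 := e2 (j+1); have a3 := hEQ (j+1)
      split_ifs at a1 a2 <;> omega
    set r := j ::ₘ μ.1.erase (j+1) with hrdef
    have hokr := okm_drop μ hjk hj1μ
    have hμr : μ.1 = bump r j := (bump_drop hj1μ).symm
    have hjr : j ∈ r := Multiset.mem_cons_self _ _
    have er : ∀ a, count a μ.1 + (if a = j then 1 else 0)
        = count a r + (if a = j+1 then 1 else 0) := fun a => by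
      have := count_bump' hjr a; rwa [← hμr] at this
    have hir : i ∈ r := by
      rw [← Multiset.count_pos]
      have a1 := e1 i; have a2 := e2 i; have a3 := hEQ i; have a4 := er i
      have b1 := e1 (j+1); have b2 := e2 (j+1); have b3 := hEQ (j+1); have b4 := er (j+1)
      split_ifs at a1 a2 a4 b1 b2 b4 <;> omega
    have e5 := count_bump' hir
    have hνr : ν.1 = bump r i := by
      ext a
      have a1 := e1 a; have a2 := e2 a; have a3 := hEQ a; have a4 := er a
      have a5 := e5 a
      split_ifs at a1 a2 a4 a5 <;> omega
    set ρ₀ : Occ k d m := ⟨r, hokr.1, hokr.2.1, hokr.2.2⟩ with hρ₀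
    have hcoll : CocT k d m μ ν j i
        = (count j r : ℚ) * (count i r : ℚ)
            * (Pval k μ.1 * Pval k ν.1 * (Pval k r)⁻¹) := by
      unfold CocT
      refine (Finset.sum_eq_single_of_mem ρ₀ (Finset.mem_univ _) ?_).trans ?_
      · intro b _ hb
        by_cases hfull : μ.1 = bump b.1 j ∧ ν.1 = bump b.1 i
        · by_cases hcb : count j b.1 = 0
          · rw [if_pos hfull, hcb]; simp
          · exfalso
            exact hb (Subtype.ext (drop_bump (Multiset.count_pos.mp (by omega)) hfull.1))
        · rw [if_neg hfull]
      · rw [if_pos ⟨hμr, hνr⟩]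
    rw [hcoll]
    unfold CovT
    rw [if_pos ⟨hbb, okm_bump μ hik hiμ⟩]
    have R1 := pval_bump hik hiμ
    have R2 := pval_bump hik hir
    rw [← hνr] at R2
    have hPr : Pval k r ≠ 0 := Pval_ne k r
    have e6 : ∀ a, count a ν.1 + (if a = i then 1 else 0)
        = count a r + (if a = i+1 then 1 else 0) := fun a => by
      have := e5 a; rwa [← hνr] at this
    by_cases hb : j = i + 1
    · -- adjacent case
      have hB : count j ν.1 = count j r + 1 := by
        have a5 := e6 j
        split_ifs at a5 <;> omega
      have hu : count j r = count (i+1) μ.1 + 1 := by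
        have hjr' : count j r = count (i+1) r := by rw [hb]
        have a4 := er (i+1)
        rw [if_pos hb.symm, if_neg (by omega : ¬ i + 1 = j + 1)] at a4
        omega
      have hE' : count (i+1) r = count (i+1) μ.1 + 1 := by
        have a4 := er (i+1)
        rw [if_pos hb.symm, if_neg (by omega : ¬ i + 1 = j + 1)] at a4
        omega
      have hBq : (count j ν.1 : ℚ) = (count (i+1) μ.1 : ℚ) + 1 + 1 := by
        rw [hB, hu]; push_cast; ring
      have huq : (count j r : ℚ) = (count (i+1) μ.1 : ℚ) + 1 := by exact_mod_cast hu
      have hE'q : (count (i+1) r : ℚ) = (count (i+1) μ.1 : ℚ) + 1 := by exact_mod_cast hE'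
      rw [hE'q] at R2
      rw [hBq, huq]
      field_simp
      push_cast at R1 R2 ⊢
      linear_combination ((count (i+1) μ.1 : ℚ) + 1 + 1) * Pval k r * R1
        - ((count (i+1) μ.1 : ℚ) + 1) * Pval k μ.1 * R2
    · -- non-adjacent case
      have hB : count j ν.1 = count j r := by
        have a5 := e6 j
        split_ifs at a5 <;> omega
      have hE' : count (i+1) r = count (i+1) μ.1 := by
        have a4 := er (i+1)
        split_ifs at a4 <;> omega
      have hBq : (count j ν.1 : ℚ) = (count j r : ℚ) := by exact_mod_cast hB
      have hE'q : (count (i+1) r : ℚ) = (count (i+1) μ.1 : ℚ) := by exact_mod_cast hE'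
      rw [hE'q] at R2
      rw [hBq]
      field_simp
      push_cast at R1 R2 ⊢
      linear_combination (count j r : ℚ) * Pval k r * R1
        - (count j r : ℚ) * Pval k μ.1 * R2
  · have hCov : CovT k d m μ ν i j = 0 := by
      unfold CovT
      split_ifs with h
      · by_cases hiμ : i ∈ μ.1
        · by_cases hjν : j ∈ ν.1
          · exact absurd ⟨h.1, hiμ, hjν⟩ hC
          · simp [Multiset.count_eq_zero.mpr hjν]
        · simp [Multiset.count_eq_zero.mpr hiμ]
      · rfl
    have hCoc : CocT k d m μ ν j i = 0 := by
      unfold CocT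
      apply Finset.sum_eq_zero
      intro ρ _
      by_cases hfull : μ.1 = bump ρ.1 j ∧ ν.1 = bump ρ.1 i
      · rw [if_pos hfull]
        by_cases hcj : count j ρ.1 = 0
        · rw [hcj]; simp
        · by_cases hci : count i ρ.1 = 0
          · rw [hci]; simp
          · exfalso
            have hjρ : j ∈ ρ.1 := Multiset.count_pos.mp (by omega)
            have hiρ : i ∈ ρ.1 := Multiset.count_pos.mp (by omega)
            apply hC
            refine ⟨?_, ?_, ?_⟩
            · rw [hfull.1, hfull.2]
              exact bump_comm hiρ hjρ hij
            · rw [← Multiset.count_pos]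
              have := count_bump' hjρ i
              rw [← hfull.1] at this
              split_ifs at this <;> omega
            · rw [← Multiset.count_pos]
              have := count_bump' hiρ j
              rw [← hfull.2] at this
              split_ifs at this <;> omega
      · rw [if_neg hfull]
    rw [hCov, hCoc]

/-! ### counting and telescoping -/

lemma card_count (k : ℕ) (t : Multiset ℕ) (h : ∀ x ∈ t, x ≤ k) :
    ∑ c ∈ Finset.range (k+1), count c t = Multiset.card t := by
  rw [← Multiset.toFinset_sum_count_eq]
  refine (Finset.sum_subset ?_ ?_).symm
  · intro x hx
    rw [Finset.mem_range]
    have := h x (Multiset.mem_toFinset.mp hx)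
    omega
  · intro x _ hx
    exact Multiset.count_eq_zero.mpr (fun hc => hx (Multiset.mem_toFinset.mpr hc))

lemma sum_count (k : ℕ) : ∀ (t : Multiset ℕ), (∀ x ∈ t, x ≤ k) →
    ∑ c ∈ Finset.range (k+1), c * count c t = t.sum := by
  intro t
  induction t using Multiset.induction_on with
  | empty => simp
  | cons a s ih =>
    intro h
    have ha : a < k + 1 := by
      have := h a (Multiset.mem_cons_self _ _); omega
    have hs := fun x hx => h x (Multiset.mem_cons_of_mem hx)
    rw [Multiset.sum_cons, ← ih hs]
    have hterm : ∀ c, c * count c (a ::ₘ s) = c * count c s + (if c = a then c else 0) := by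
      intro c
      rw [Multiset.count_cons]
      rcases eq_or_ne c a with rfl | hne
      · simp [Nat.mul_add]
      · simp [hne]
    rw [Finset.sum_congr rfl (fun c _ => hterm c), Finset.sum_add_distrib,
      Finset.sum_ite_eq' (Finset.range (k+1)) a (fun c => c),
      if_pos (Finset.mem_range.mpr ha)]
    omega

lemma tele (k : ℕ) (E : ℕ → ℚ) (K : ℕ) :
    ∑ i ∈ Finset.range K, ((i:ℚ)+1) * ((k:ℚ) - i) * (E i - E (i+1))
      = (∑ c ∈ Finset.range K, ((k:ℚ) - 2*c) * E c) - K * ((k:ℚ) - K + 1) * E K := by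
  induction K with
  | zero => simp
  | succ n ih =>
    rw [Finset.sum_range_succ, Finset.sum_range_succ, ih]
    push_cast
    ring

/-! ### assembling the key identity -/

lemma aux_split (K : ℕ) (f g : ℕ → ℕ → ℚ)
    (h : ∀ i ∈ Finset.range K, ∀ j ∈ Finset.range K, i ≠ j → f i j = g j i) :
    ∑ i ∈ Finset.range K, ∑ j ∈ Finset.range K, f i j
      = (∑ i ∈ Finset.range K, ∑ j ∈ Finset.range K, g i j)
        + ∑ i ∈ Finset.range K, (f i i - g i i) := by
  have h1 : ∀ i ∈ Finset.range K, ∑ j ∈ Finset.range K, f i j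
      = (∑ j ∈ Finset.range K, g j i) + (f i i - g i i) := by
    intro i hi
    have : ∀ j ∈ Finset.range K, f i j
        = g j i + (if i = j then f i i - g i i else 0) := by
      intro j hj
      rcases eq_or_ne i j with rfl | hne
      · rw [if_pos rfl]; ring
      · rw [if_neg hne, h i hi j hj hne, add_zero]
    rw [Finset.sum_congr rfl this, Finset.sum_add_distrib,
      Finset.sum_ite_eq (Finset.range K) i (fun _ => f i i - g i i), if_pos hi]
  rw [Finset.sum_congr rfl h1, Finset.sum_add_distrib]
  congr 1
  exact Finset.sum_comm

lemma sum_cov_coc (k d m : ℕ) (μ ν : Occ k d (m+1)) :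
    ∑ i ∈ Finset.range k, ∑ j ∈ Finset.range k, CovT k d m μ ν i j
      = (∑ i ∈ Finset.range k, ∑ j ∈ Finset.range k, CocT k d m μ ν i j)
        + ∑ i ∈ Finset.range k, (CovT k d m μ ν i i - CocT k d m μ ν i i) := by
  exact aux_split k (fun i j => CovT k d m μ ν i j) (fun i j => CocT k d m μ ν i j)
    (fun i hi j hj hne =>
      cov_coc_off μ ν (Finset.mem_range.mp hi) (Finset.mem_range.mp hj) hne)

lemma key_diag (k d m : ℕ) (μ : Occ k d (m+1)) :
    ∑ i ∈ Finset.range k, (CovT k d m μ μ i i - CocT k d m μ μ i i)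
      = ((d:ℚ)*(k:ℚ) - 2*((m:ℚ)+1)) * Pval k μ.1 := by
  set E : ℕ → ℚ := fun c => (count c μ.1 : ℚ) with hE
  have hterm : ∀ i ∈ Finset.range k,
      CovT k d m μ μ i i - CocT k d m μ μ i i
        = Pval k μ.1 * (((i:ℚ)+1) * ((k:ℚ) - i) * (E i - E (i+1))) := by
    intro i hi
    have hik : i < k := Finset.mem_range.mp hi
    rw [cov_diag μ hik, coc_diag μ hik]
    have hcast : (((i+1)*(k-i) : ℕ) : ℚ) = ((i:ℚ)+1) * ((k:ℚ) - i) := by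
      push_cast [Nat.cast_sub (le_of_lt hik)]
      ring
    rw [hcast, hE]
    ring
  rw [Finset.sum_congr rfl hterm, ← Finset.mul_sum, tele k E k]
  have h1 : (∑ c ∈ Finset.range k, ((k:ℚ) - 2*c) * E c) - (k:ℚ) * ((k:ℚ) - k + 1) * E k
      = ∑ c ∈ Finset.range (k+1), ((k:ℚ) - 2*c) * E c := by
    rw [Finset.sum_range_succ]
    push_cast
    ring
  rw [h1]
  have h2 : ∑ c ∈ Finset.range (k+1), ((k:ℚ) - 2*c) * E c
      = (k:ℚ) * (∑ c ∈ Finset.range (k+1), E c) - 2 * (∑ c ∈ Finset.range (k+1), (c:ℚ) * E c) := by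
    rw [Finset.mul_sum, Finset.mul_sum, ← Finset.sum_sub_distrib]
    exact Finset.sum_congr rfl (fun c _ => by ring)
  rw [h2]
  have hc1 : ∑ c ∈ Finset.range (k+1), E c = (d:ℚ) := by
    rw [hE]
    have := card_count k μ.1 μ.2.2.2
    rw [← Nat.cast_sum]
    rw [this, μ.2.1]
  have hc2 : ∑ c ∈ Finset.range (k+1), (c:ℚ) * E c = (m:ℚ) + 1 := by
    rw [hE]
    have := sum_count k μ.1 μ.2.2.2
    have hcast : ∑ c ∈ Finset.range (k+1), (c:ℚ) * (count c μ.1 : ℚ)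
        = ((∑ c ∈ Finset.range (k+1), c * count c μ.1 : ℕ) : ℚ) := by
      push_cast
      rfl
    rw [hcast, this, μ.2.2.1]
    push_cast
    rfl
  rw [hc1, hc2]
  ring

theorem key (k d m : ℕ) :
    (Fm k d (m+1))ᵀ * Pd k d (m+2) * Fm k d (m+1)
      = ((d:ℚ)*(k:ℚ) - 2*((m:ℚ)+1)) • Pd k d (m+1)
        + ((Fm k d m)ᵀ * Pd k d (m+1))ᵀ * Pdinv k d m * ((Fm k d m)ᵀ * Pd k d (m+1)) := by
  ext μ ν
  rw [Matrix.add_apply, Matrix.smul_apply, lhs_entry, rhs_entry, sum_cov_coc]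
  rw [add_comm]
  congr 1
  rcases eq_or_ne μ ν with rfl | hne
  · rw [key_diag, Pd, Matrix.diagonal_apply_eq, smul_eq_mul]
  · rw [Pd, Matrix.diagonal_apply_ne _ hne, smul_eq_mul, mul_zero]
    exact Finset.sum_eq_zero (fun i _ => by
      rw [cov_diag_ne hne i, coc_diag_ne hne i, sub_zero])

/-! ### translation between `Amat` and `Fm` -/

lemma occEquiv_coe (k d n : ℕ) (s : RP k d n) :
    (occEquiv k d n s).1 = s.1.parts + Multiset.replicate (d - Multiset.card s.1.parts) 0 := rfl

lemma zsplit {a b : Multiset ℕ} (ha : ∀ z ∈ a, 0 < z) (hb : ∀ z ∈ b, 0 < z) (x y : ℕ) :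
    a + Multiset.replicate x 0 = b + Multiset.replicate y 0 ↔ a = b ∧ x = y := by
  constructor
  · intro h
    have hfil : ∀ (c : Multiset ℕ), (∀ z ∈ c, 0 < z) → ∀ w : ℕ,
        (c + Multiset.replicate w 0).filter (fun z => 0 < z) = c := by
      intro c hc w
      rw [Multiset.filter_add, Multiset.filter_eq_self.mpr hc,
        Multiset.filter_eq_nil.mpr (fun z hz => by
          rw [Multiset.eq_of_mem_replicate hz]; omega), add_zero]
    have hab : a = b := by
      have := congrArg (fun t => Multiset.filter (fun z => 0 < z) t) h
      simpa [hfil a ha x, hfil b hb y] using this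
    refine ⟨hab, ?_⟩
    have := congrArg (fun t => Multiset.card t) h
    simp only [Multiset.card_add, Multiset.card_replicate, hab] at this
    omega
  · rintro ⟨rfl, rfl⟩; rfl

lemma amat_eq_fm (k d m : ℕ) (hk : 0 < k) (μ : RP k d m) (lam : RP k d (m+1)) :
    Amat k d (m+1) μ lam = Fm k d m (occEquiv k d (m+1) lam) (occEquiv k d m μ) := by
  have hμpos : ∀ z ∈ μ.1.parts, 0 < z := fun z hz => μ.1.parts_pos hz
  have hlpos : ∀ z ∈ lam.1.parts, 0 < z := fun z hz => lam.1.parts_pos hz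
  have hμcard : Multiset.card μ.1.parts ≤ d := μ.2.1
  have hlcard : Multiset.card lam.1.parts ≤ d := lam.2.1
  have h0μ : (0:ℕ) ∉ μ.1.parts := fun h => by have := hμpos 0 h; omega
  set a := lam.1.parts with ha
  set b := μ.1.parts with hb
  set ra := d - Multiset.card a with hra
  set rb := d - Multiset.card b with hrb
  have hrange : Finset.range k = insert 0 (Finset.Icc 1 (k-1)) := by
    ext c; simp only [Finset.mem_range, Finset.mem_insert, Finset.mem_Icc]; omega
  have h0notin : (0:ℕ) ∉ Finset.Icc 1 (k-1) := by simp
  show (if a = 1 ::ₘ b then ((d : ℚ) - Multiset.card b) else 0)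
      + (∑ i ∈ Finset.Icc 1 (k-1), if a = (i + 1) ::ₘ b.erase i then (b.count i : ℚ) else 0)
    = ∑ i ∈ Finset.range k,
        if a + Multiset.replicate ra 0 = bump (b + Multiset.replicate rb 0) i
        then (count i (b + Multiset.replicate rb 0) : ℚ) else 0
  rw [hrange, Finset.sum_insert h0notin]
  congr 1
  · -- the `i = 0` term
    have hcount0 : count 0 (b + Multiset.replicate rb 0) = rb := by
      rw [Multiset.count_add, Multiset.count_eq_zero.mpr h0μ,
        Multiset.count_replicate, if_pos rfl, zero_add]
    rcases Nat.eq_zero_or_pos rb with hrb0 | hrbpos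
    · -- no room: both sides are zero
      have hd : (d : ℚ) - (Multiset.card b : ℚ) = 0 := by
        have : Multiset.card b = d := by omega
        rw [this]; ring
      have hc0 : (count 0 (b + Multiset.replicate rb 0) : ℚ) = 0 := by
        rw [hcount0, hrb0]; simp
      rw [hc0, hd]
      split_ifs <;> simp
    · -- rb ≥ 1
      have herase : (b + Multiset.replicate rb 0).erase 0
          = b + Multiset.replicate (rb - 1) 0 := by
        rw [Multiset.erase_add_right_pos _ (Multiset.mem_replicate.mpr ⟨by omega, rfl⟩)]
        congr 1
        conv_lhs => rw [show rb = (rb - 1) + 1 by omega, Multiset.replicate_succ]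
        rw [Multiset.erase_cons_head]
      have hcond : (a + Multiset.replicate ra 0 = bump (b + Multiset.replicate rb 0) 0)
          ↔ a = 1 ::ₘ b := by
        unfold bump
        rw [herase, show ((0:ℕ)+1) = 1 from rfl, ← Multiset.cons_add]
        rw [zsplit hlpos (fun z hz => by
          rcases Multiset.mem_cons.mp hz with rfl | hz
          · omega
          · exact hμpos z hz) ra (rb - 1)]
        constructor
        · exact fun h => h.1
        · intro h
          refine ⟨h, ?_⟩
          have : Multiset.card a = Multiset.card b + 1 := by
            rw [h, Multiset.card_cons]
          omega
      have hw : (count 0 (b + Multiset.replicate rb 0) : ℚ)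
          = (d : ℚ) - (Multiset.card b : ℚ) := by
        rw [hcount0, hrb]
        push_cast [Nat.cast_sub hμcard]
        ring
      rw [hw]
      split_ifs with h1 h2 h2
      · rfl
      · exact absurd (hcond.mpr h1) h2
      · exact absurd (hcond.mp h2) h1
      · rfl
  · -- the `i ≥ 1` terms
    apply Finset.sum_congr rfl
    intro i hi
    have hi1 : 1 ≤ i ∧ i ≤ k - 1 := Finset.mem_Icc.mp hi
    have hine : i ≠ 0 := by omega
    have hcnti : count i (b + Multiset.replicate rb 0) = count i b := by
      rw [Multiset.count_add, Multiset.count_replicate, if_neg (show ¬(0:ℕ) = i by omega), add_zero]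
    by_cases hib : i ∈ b
    · have herase : (b + Multiset.replicate rb 0).erase i
          = b.erase i + Multiset.replicate rb 0 :=
        Multiset.erase_add_left_pos _ hib
      have hcond : (a + Multiset.replicate ra 0 = bump (b + Multiset.replicate rb 0) i)
          ↔ a = (i+1) ::ₘ b.erase i := by
        unfold bump
        rw [herase, ← Multiset.cons_add]
        rw [zsplit hlpos (fun z hz => by
          rcases Multiset.mem_cons.mp hz with rfl | hz
          · omega
          · exact hμpos z (Multiset.mem_of_mem_erase hz)) ra rb]
        constructor
        · exact fun h => h.1
        · intro h
          refine ⟨h, ?_⟩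
          have hcb : Multiset.card (b.erase i) + 1 = Multiset.card b := by
            rw [Multiset.card_erase_of_mem hib]
            have h0 : 0 < Multiset.card b := Multiset.card_pos_iff_exists_mem.mpr ⟨_, hib⟩
            exact Nat.succ_pred_eq_of_pos h0
          have : Multiset.card a = Multiset.card b := by
            rw [h, Multiset.card_cons]
            omega
          omega
      rw [hcnti]
      split_ifs with h1 h2 h2
      · rfl
      · exact absurd (hcond.mpr h1) h2
      · exact absurd (hcond.mp h2) h1
      · rfl
    · have hc0 : count i b = 0 := Multiset.count_eq_zero.mpr hib
      rw [hcnti, hc0]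
      split_ifs <;> simp

/-! ### quadratic forms -/

lemma qform {α β : Type*} [Fintype α] [Fintype β] (B : Matrix α β ℚ) (D : Matrix α α ℚ)
    (x : β → ℚ) :
    x ⬝ᵥ ((Bᵀ * D * B) *ᵥ x) = (B *ᵥ x) ⬝ᵥ (D *ᵥ (B *ᵥ x)) := by
  rw [← Matrix.mulVec_mulVec, ← Matrix.mulVec_mulVec, Matrix.dotProduct_mulVec x,
    Matrix.vecMul_transpose]

lemma qdiag {α : Type*} [Fintype α] [DecidableEq α] (w : α → ℚ) (v : α → ℚ) :
    v ⬝ᵥ ((Matrix.diagonal w) *ᵥ v) = ∑ a : α, w a * v a ^ 2 := by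
  unfold dotProduct
  apply Finset.sum_congr rfl
  intro a _
  rw [Matrix.mulVec_diagonal]
  ring

lemma qPd_pos {k d n : ℕ} {v : Occ k d n → ℚ} (hv : v ≠ 0) :
    0 < v ⬝ᵥ ((Pd k d n) *ᵥ v) := by
  rw [Pd, qdiag]
  obtain ⟨a, hva⟩ : ∃ a, v a ≠ 0 := Function.ne_iff.mp hv
  apply Finset.sum_pos'
  · intro b _
    have := Pval_pos k b.1
    positivity
  · exact ⟨a, Finset.mem_univ a, by
      have := Pval_pos k a.1
      have h2 : 0 < v a ^ 2 := by positivity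
      positivity⟩

lemma qPd_nonneg {k d n : ℕ} (v : Occ k d n → ℚ) :
    0 ≤ v ⬝ᵥ ((Pd k d n) *ᵥ v) := by
  rcases eq_or_ne v 0 with rfl | h
  · simp
  · exact le_of_lt (qPd_pos h)

lemma qPdinv_nonneg {k d n : ℕ} (v : Occ k d n → ℚ) :
    0 ≤ v ⬝ᵥ ((Pdinv k d n) *ᵥ v) := by
  rw [Pdinv, qdiag]
  apply Finset.sum_nonneg
  intro b _
  have := Pval_pos k b.1
  positivity

lemma Pd_Pdinv_mulVec {k d n : ℕ} (y : Occ k d n → ℚ) :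
    (Pd k d n) *ᵥ ((Pdinv k d n) *ᵥ y) = y := by
  funext a
  rw [Matrix.mulVec_mulVec]
  simp only [Pd, Pdinv]
  rw [Matrix.diagonal_mul_diagonal, Matrix.mulVec_diagonal]
  rw [mul_inv_cancel₀ (Pval_ne k a.1), one_mul]

/-! ### injectivity in the two regimes -/

lemma inj_up (k d m : ℕ) (hc : 0 < (d:ℚ)*(k:ℚ) - 2*((m:ℚ)+1)) (x : Occ k d (m+1) → ℚ)
    (hx : Fm k d (m+1) *ᵥ x = 0) : x = 0 := by
  by_contra hxne
  have hkey : x ⬝ᵥ (((Fm k d (m+1))ᵀ * Pd k d (m+2) * Fm k d (m+1)) *ᵥ x)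
      = x ⬝ᵥ ((((d:ℚ)*(k:ℚ) - 2*((m:ℚ)+1)) • Pd k d (m+1)
          + ((Fm k d m)ᵀ * Pd k d (m+1))ᵀ * Pdinv k d m
              * ((Fm k d m)ᵀ * Pd k d (m+1))) *ᵥ x) := by
    rw [key k d m]
  rw [qform (Fm k d (m+1)) (Pd k d (m+2)) x, hx] at hkey
  simp only [Matrix.mulVec_zero, dotProduct_zero] at hkey
  rw [Matrix.add_mulVec, Matrix.smul_mulVec, dotProduct_add,
    dotProduct_smul, qform ((Fm k d m)ᵀ * Pd k d (m+1)) (Pdinv k d m) x,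
    smul_eq_mul] at hkey
  have hq1 := qPd_pos hxne
  have hq2 := qPdinv_nonneg ((((Fm k d m)ᵀ * Pd k d (m+1))) *ᵥ x)
  nlinarith [mul_pos hc hq1]

lemma inj_down (k d m : ℕ) (hc : (d:ℚ)*(k:ℚ) - 2*((m:ℚ)+1) < 0) (y : Occ k d (m+1) → ℚ)
    (hy : (Fm k d m)ᵀ *ᵥ y = 0) : y = 0 := by
  by_contra hyne
  set u := (Pdinv k d (m+1)) *ᵥ y with hu
  have hPu : (Pd k d (m+1)) *ᵥ u = y := Pd_Pdinv_mulVec y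
  have hune : u ≠ 0 := by
    intro h0
    apply hyne
    rw [← hPu, h0, Matrix.mulVec_zero]
  have hBu : (((Fm k d m)ᵀ * Pd k d (m+1))) *ᵥ u = 0 := by
    rw [← Matrix.mulVec_mulVec, hPu, hy]
  have hkey : u ⬝ᵥ (((Fm k d (m+1))ᵀ * Pd k d (m+2) * Fm k d (m+1)) *ᵥ u)
      = u ⬝ᵥ ((((d:ℚ)*(k:ℚ) - 2*((m:ℚ)+1)) • Pd k d (m+1)
          + ((Fm k d m)ᵀ * Pd k d (m+1))ᵀ * Pdinv k d m
              * ((Fm k d m)ᵀ * Pd k d (m+1))) *ᵥ u) := by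
    rw [key k d m]
  rw [qform (Fm k d (m+1)) (Pd k d (m+2)) u] at hkey
  rw [Matrix.add_mulVec, Matrix.smul_mulVec, dotProduct_add,
    dotProduct_smul, qform ((Fm k d m)ᵀ * Pd k d (m+1)) (Pdinv k d m) u,
    hBu, smul_eq_mul] at hkey
  simp only [Matrix.mulVec_zero, dotProduct_zero, add_zero] at hkey
  have hq1 := qPd_pos hune
  have hq2 := qPd_nonneg (Fm k d (m+1) *ᵥ u)
  nlinarith [mul_neg_of_neg_of_pos hc hq1]

lemma inj_up_zero (k d : ℕ) (hk : 0 < k) (hd : 0 < d) (x : Occ k d 0 → ℚ)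
    (hx : Fm k d 0 *ᵥ x = 0) : x = 0 := by
  have hzero : ∀ t : Occ k d 0, t.1 = Multiset.replicate d 0 := by
    intro t
    rw [Multiset.eq_replicate]
    refine ⟨t.2.1, fun b hb => ?_⟩
    have h1 : b ≤ t.1.sum := Multiset.single_le_sum (fun _ _ => Nat.zero_le _) _ hb
    have h2 := t.2.2.1
    omega
  have hrep0 : ∀ z ∈ Multiset.replicate d (0:ℕ), z ≤ k := fun z hz => by
    rw [Multiset.eq_of_mem_replicate hz]; omega
  set μ0 : Occ k d 0 := ⟨Multiset.replicate d 0, by simp, by simp, hrep0⟩ with hμ0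
  have hmem0 : (0:ℕ) ∈ μ0.1 := Multiset.mem_replicate.mpr ⟨by omega, rfl⟩
  set l0 : Occ k d 1 := ⟨bump μ0.1 0,
    by rw [card_bump hmem0, μ0.2.1],
    by rw [sum_bump hmem0, μ0.2.2.1],
    mem_bump_le hk hrep0⟩ with hl0
  have hFent : Fm k d 0 l0 μ0 = (d:ℚ) := by
    show (∑ i ∈ Finset.range k, if l0.1 = bump μ0.1 i then (count i μ0.1 : ℚ) else 0) = (d:ℚ)
    have hrange : Finset.range k = insert 0 (Finset.Icc 1 (k-1)) := by
      ext c; simp only [Finset.mem_range, Finset.mem_insert, Finset.mem_Icc]; omega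
    rw [hrange, Finset.sum_insert (by simp)]
    have h1 : (if l0.1 = bump μ0.1 0 then (count 0 μ0.1 : ℚ) else 0) = (d:ℚ) := by
      rw [if_pos rfl]
      show ((count 0 (Multiset.replicate d 0) : ℕ) : ℚ) = (d:ℚ)
      rw [Multiset.count_replicate, if_pos rfl]
    have h2 : ∑ i ∈ Finset.Icc 1 (k-1),
        (if l0.1 = bump μ0.1 i then (count i μ0.1 : ℚ) else 0) = 0 := by
      apply Finset.sum_eq_zero
      intro i hi
      have hine : ¬ (0:ℕ) = i := by
        have := Finset.mem_Icc.mp hi; omega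
      have : (count i μ0.1 : ℚ) = 0 := by
        show ((count i (Multiset.replicate d 0) : ℕ) : ℚ) = 0
        rw [Multiset.count_replicate, if_neg hine]
        rfl
      rw [this]
      split_ifs <;> rfl
    rw [h1, h2, add_zero]
  have hsum : (Fm k d 0 *ᵥ x) l0 = (d:ℚ) * x μ0 := by
    show (∑ μ : Occ k d 0, Fm k d 0 l0 μ * x μ) = (d:ℚ) * x μ0
    refine (Finset.sum_eq_single_of_mem μ0 (Finset.mem_univ _) ?_).trans ?_
    · intro b _ hb
      exact absurd (Subtype.ext ((hzero b).trans rfl)) hb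
    · rw [hFent]
  have hx0 : x μ0 = 0 := by
    have : (Fm k d 0 *ᵥ x) l0 = 0 := by rw [hx]; rfl
    rw [hsum] at this
    have hd' : (d:ℚ) ≠ 0 := by positivity
    exact (mul_eq_zero.mp this).resolve_left hd'
  funext t
  have ht : t = μ0 := Subtype.ext ((hzero t).trans rfl)
  rw [ht, hx0]
  rfl

/-! ### rank lemmas -/

lemma rank_eq_card_of_inj {α β : Type*} [Fintype α] [Fintype β] (M : Matrix α β ℚ)
    (h : ∀ x : β → ℚ, M *ᵥ x = 0 → x = 0) : M.rank = Fintype.card β := by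
  have hinj : Function.Injective M.mulVecLin := by
    rw [← LinearMap.ker_eq_bot, LinearMap.ker_eq_bot']
    intro x hx0
    exact h x hx0
  rw [Matrix.rank, LinearMap.finrank_range_of_inj hinj,
    Module.finrank_fintype_fun_eq_card]

lemma card_rp (k d n : ℕ) : Fintype.card (RP k d n) = p k d n := by
  rw [p, ← Fintype.card_subtype]
  rfl

/-! ### the main theorem -/

theorem Amat_full_rank' (k d n : ℕ) (hk : 0 < k) (hd : 0 < d)
    (hn1 : 1 ≤ n) (hn2 : n ≤ d * k) :
    (Amat k d n).rank = min (p k d (n - 1)) (p k d n) := by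
  obtain ⟨m, rfl⟩ : ∃ m, n = m + 1 := ⟨n - 1, by omega⟩
  have hsub : m + 1 - 1 = m := rfl
  set e1 := occEquiv k d m with he1
  set e2 := occEquiv k d (m+1) with he2
  set M := Fm k d m with hM
  have hAF : ∀ (μ : RP k d m) (lam : RP k d (m+1)),
      Amat k d (m+1) μ lam = M (e2 lam) (e1 μ) := fun μ lam => amat_eq_fm k d m hk μ lam
  by_cases hcase : 2 * m < d * k
  · -- injective going up: rank = p (m)
    have hinjM : ∀ x : Occ k d m → ℚ, M *ᵥ x = 0 → x = 0 := by
      rcases Nat.eq_zero_or_pos m with rfl | hm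
      · exact fun x hx => inj_up_zero k d hk hd x hx
      · obtain ⟨m', rfl⟩ : ∃ m', m = m' + 1 := ⟨m - 1, by omega⟩
        intro x hx
        refine inj_up k d m' ?_ x hx
        have : (2 * (m' + 1) : ℕ) < d * k := hcase
        have hcast : ((2 * (m' + 1) : ℕ) : ℚ) < ((d * k : ℕ) : ℚ) := by
          exact_mod_cast this
        push_cast at hcast
        linarith
    have hinjT : ∀ x : RP k d m → ℚ, (Amat k d (m+1))ᵀ *ᵥ x = 0 → x = 0 := by
      intro x hx
      have hMx : M *ᵥ (x ∘ e1.symm) = 0 := by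
        funext l
        have h1 : ((Amat k d (m+1))ᵀ *ᵥ x) (e2.symm l) = 0 := by rw [hx]; rfl
        simp only [Pi.zero_apply]
        rw [← h1]
        show ∑ μ' : Occ k d m, M l μ' * (x (e1.symm μ'))
          = ∑ μ : RP k d m, (Amat k d (m+1))ᵀ (e2.symm l) μ * x μ
        rw [← Equiv.sum_comp e1 (fun μ' => M l μ' * x (e1.symm μ'))]
        apply Finset.sum_congr rfl
        intro μ _
        rw [Matrix.transpose_apply, hAF μ (e2.symm l), Equiv.apply_symm_apply,
          Equiv.symm_apply_apply]
      have := hinjM (x ∘ e1.symm) hMx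
      funext μ
      have h2 : (x ∘ e1.symm) (e1 μ) = 0 := by rw [this]; rfl
      simpa using h2
    have hrankT : (Amat k d (m+1))ᵀ.rank = p k d m := by
      rw [rank_eq_card_of_inj _ hinjT, card_rp]
    have hrank : (Amat k d (m+1)).rank = p k d m := by
      rw [← Matrix.rank_transpose, hrankT]
    have hle : (Amat k d (m+1)).rank ≤ p k d (m+1) := by
      have := Matrix.rank_le_card_width (Amat k d (m+1))
      rwa [card_rp] at this
    rw [hrank] at hle
    show (Amat k d (m+1)).rank = min (p k d m) (p k d (m+1))
    rw [hrank]
    omega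
  · -- surjective going up: rank = p (m+1)
    have hinjM : ∀ y : Occ k d (m+1) → ℚ, Mᵀ *ᵥ y = 0 → y = 0 := by
      intro y hy
      refine inj_down k d m ?_ y hy
      have h1 : (d * k : ℕ) ≤ 2 * m := by omega
      have hcast : ((d * k : ℕ) : ℚ) ≤ ((2 * m : ℕ) : ℚ) := by exact_mod_cast h1
      push_cast at hcast
      linarith
    have hinjA : ∀ z : RP k d (m+1) → ℚ, Amat k d (m+1) *ᵥ z = 0 → z = 0 := by
      intro z hz
      have hMz : Mᵀ *ᵥ (z ∘ e2.symm) = 0 := by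
        funext l
        have h1 : (Amat k d (m+1) *ᵥ z) (e1.symm l) = 0 := by rw [hz]; rfl
        simp only [Pi.zero_apply]
        rw [← h1]
        show ∑ lam' : Occ k d (m+1), Mᵀ l lam' * (z (e2.symm lam'))
          = ∑ lam : RP k d (m+1), Amat k d (m+1) (e1.symm l) lam * z lam
        rw [← Equiv.sum_comp e2 (fun lam' => Mᵀ l lam' * z (e2.symm lam'))]
        apply Finset.sum_congr rfl
        intro lam _
        rw [Matrix.transpose_apply, hAF (e1.symm l) lam, Equiv.apply_symm_apply,
          Equiv.symm_apply_apply]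
      have := hinjM (z ∘ e2.symm) hMz
      funext lam
      have h2 : (z ∘ e2.symm) (e2 lam) = 0 := by rw [this]; rfl
      simpa using h2
    have hrank : (Amat k d (m+1)).rank = p k d (m+1) := by
      rw [rank_eq_card_of_inj _ hinjA, card_rp]
    have hle : (Amat k d (m+1)).rank ≤ p k d m := by
      have := Matrix.rank_le_card_height (Amat k d (m+1))
      rwa [card_rp] at this
    rw [hrank] at hle
    show (Amat k d (m+1)).rank = min (p k d m) (p k d (m+1))
    rw [hrank]
    omega


/-- The weighted incidence matrix `A_{k,d,n}` has full rank for `1 ≤ n ≤ d*k`. -/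
theorem Amat_full_rank (k d n : ℕ) (hk : 0 < k) (hd : 0 < d)
    (hn1 : 1 ≤ n) (hn2 : n ≤ d * k) :
    (Amat k d n).rank = min (p k d (n - 1)) (p k d n) :=
  Amat_full_rank' k d n hk hd hn1 hn2
end

section
/- Let V be a real vector space, d ≥ 1 and k ≥ 1 integers, μ : V^d → ℝ a symmetric d-multilinear form, and g : V → V a linear map with g = id + N where N^{k+1} = 0, such that μ(g v_1, ..., g v_d) = μ(v_1, ..., v_d) for all v_1,...,v_d ∈ V. Fix H ∈ V. Then for all natural numbers e_0,...,e_k with Σ_{i=0}^{k} e_i = d and Σ_{i=0}^{k} i·e_i > dk/2, the intersection number μ evaluated on the list of vectors consisting of N^i(H) repeated e_i times for each i = 0,...,k is zero. -/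
namespace VanishingAux

open Finset

variable {d k : ℕ}

/-- sl2 lowering weight `r i = (i+1)(k-i)`. -/
noncomputable def rr (k i : ℕ) : ℝ := ((i : ℝ) + 1) * ((k : ℝ) - (i : ℝ))

lemma rr_pos {k i : ℕ} (h : i < k) : 0 < rr k i := by
  have h' : (i : ℝ) < (k : ℝ) := by exact_mod_cast h
  have h1 : (0:ℝ) < (i:ℝ) + 1 := by positivity
  exact mul_pos h1 (by linarith)

lemma rr_k (k : ℕ) : rr k k = 0 := by simp [rr]

lemma rr_diag (k i : ℕ) : (if 1 ≤ i then rr k (i-1) else 0) - rr k i = 2 * (i:ℝ) - k := by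
  cases i with
  | zero => simp [rr]
  | succ m =>
      rw [if_pos (by omega : 1 ≤ m+1), Nat.add_sub_cancel]
      unfold rr
      push_cast
      ring

noncomputable def ww (k i : ℕ) : ℝ := ∏ m ∈ Finset.range i, (rr k m)⁻¹

lemma ww_pos {k i : ℕ} (h : i ≤ k) : 0 < ww k i := by
  apply Finset.prod_pos
  intro m hm
  exact inv_pos.mpr (rr_pos (lt_of_lt_of_le (Finset.mem_range.mp hm) h))

noncomputable def WW (k : ℕ) (b : Fin d → ℕ) : ℝ := ∏ j, ww k (b j)

lemma WW_pos {b : Fin d → ℕ} (h : ∀ j, b j ≤ k) : 0 < WW k b :=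
  Finset.prod_pos fun j _ => ww_pos (h j)

def up (a : Fin d → ℕ) (j : Fin d) : Fin d → ℕ := Function.update a j (a j + 1)
def dn (a : Fin d → ℕ) (j : Fin d) : Fin d → ℕ := Function.update a j (a j - 1)

lemma up_self (a : Fin d → ℕ) (j : Fin d) : up a j j = a j + 1 := by
  simp [up]

lemma up_ne (a : Fin d → ℕ) {j l : Fin d} (h : l ≠ j) : up a j l = a l := by
  simp [up, Function.update_of_ne h]

lemma dn_self (a : Fin d → ℕ) (j : Fin d) : dn a j j = a j - 1 := by
  simp [dn]

lemma dn_ne (a : Fin d → ℕ) {j l : Fin d} (h : l ≠ j) : dn a j l = a l := by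
  simp [dn, Function.update_of_ne h]

lemma dn_up (b : Fin d → ℕ) (l : Fin d) : dn (up b l) l = b := by
  funext m
  by_cases h : m = l
  · subst h; simp [dn, up]
  · rw [dn_ne _ h, up_ne _ h]

lemma up_dn {b : Fin d → ℕ} {j : Fin d} (h : 1 ≤ b j) : up (dn b j) j = b := by
  funext m
  by_cases hm : m = j
  · subst hm; simp [up, dn]; omega
  · rw [up_ne _ hm, dn_ne _ hm]

lemma dn_up_comm {j l : Fin d} (h : j ≠ l) (b : Fin d → ℕ) :
    dn (up b l) j = up (dn b j) l := by
  funext m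
  by_cases hm : m = j
  · subst hm
    rw [dn_self, up_ne _ h, up_ne _ h, dn_self]
  · rw [dn_ne _ hm]
    by_cases hml : m = l
    · subst hml
      rw [up_self, up_self, dn_ne _ (Ne.symm h)]
    · rw [up_ne _ hml, up_ne _ hml, dn_ne _ hm]

lemma sum_up (a : Fin d → ℕ) (j : Fin d) : ∑ m, up a j m = (∑ m, a m) + 1 := by
  unfold up
  rw [Finset.sum_update_of_mem (Finset.mem_univ j)]
  rw [← Finset.add_sum_erase _ a (Finset.mem_univ j), Finset.erase_eq]
  omega

lemma sum_dn {b : Fin d → ℕ} {j : Fin d} (h : 1 ≤ b j) :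
    (∑ m, dn b j m) + 1 = ∑ m, b m := by
  unfold dn
  rw [Finset.sum_update_of_mem (Finset.mem_univ j)]
  rw [← Finset.add_sum_erase _ b (Finset.mem_univ j), Finset.erase_eq]
  omega

lemma WW_up {b : Fin d → ℕ} {l : Fin d} (hl : b l < k) :
    rr k (b l) * WW k (up b l) = WW k b := by
  unfold WW up
  have : (fun j => ww k (Function.update b l (b l + 1) j))
      = Function.update (fun j => ww k (b j)) l (ww k (b l + 1)) := by
    funext m
    by_cases hm : m = l
    · subst hm; simp
    · simp [Function.update_of_ne hm]
  rw [show ∏ j, ww k (Function.update b l (b l + 1) j)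
      = ∏ j, Function.update (fun j => ww k (b j)) l (ww k (b l + 1)) j from by rw [this]]
  rw [Finset.prod_update_of_mem (Finset.mem_univ l)]
  rw [← Finset.mul_prod_erase _ _ (Finset.mem_univ l), Finset.erase_eq]
  have hws : ww k (b l + 1) = ww k (b l) * (rr k (b l))⁻¹ := Finset.prod_range_succ _ _
  rw [hws, ← mul_assoc, ← mul_assoc]
  congr 1
  rw [mul_comm (rr k (b l)) (ww k (b l)), mul_assoc,
    mul_inv_cancel₀ (ne_of_gt (rr_pos hl)), mul_one]



/-- auxiliary "adjoint-applied" function `y = E* c`. -/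
noncomputable def yy (k : ℕ) (c : (Fin d → ℕ) → ℝ) (b' : Fin d → ℕ) : ℝ :=
  ∑ j, if 1 ≤ b' j then rr k (b' j - 1) * c (dn b' j) else 0

lemma core (d k n : ℕ) (c : (Fin d → ℕ) → ℝ)
    (hA : ∀ a : Fin d → ℕ, (∃ j, k + 1 ≤ a j) → c a = 0)
    (hn : d * k < 2 * n)
    (hstar : ∀ a : Fin d → ℕ, (∑ j, a j) + 1 = n → (∑ j, c (up a j)) = 0)
    (b₀ : Fin d → ℕ) (hb₀n : ∑ j, b₀ j = n) (hb₀k : ∀ j, b₀ j ≤ k) :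
    c b₀ = 0 := by
  classical
  -- vanishing of y on boundary tuples
  have hyzero : ∀ b' : Fin d → ℕ, (∀ j, b' j ≤ k + 1) → (∃ m, b' m = k + 1) →
      yy k c b' = 0 := by
    rintro b' hle ⟨m, hm⟩
    apply Finset.sum_eq_zero
    intro j _
    by_cases h1 : 1 ≤ b' j
    · rw [if_pos h1]
      by_cases hmj : m = j
      · subst hmj
        rw [show b' m - 1 = k by omega, rr_k, zero_mul]
      · have hc0 : c (dn b' j) = 0 := by
          apply hA
          exact ⟨m, by rw [dn_ne _ hmj]; omega⟩
        rw [hc0, mul_zero]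
    · rw [if_neg h1]
  -- the pointwise commutator identity
  have point : ∀ b : Fin d → ℕ,
      (∑ j, if 1 ≤ b j then rr k (b j - 1) * (∑ l, c (up (dn b j) l)) else 0)
        - (∑ l, yy k c (up b l))
      = (2 * (∑ j, (b j : ℝ)) - (d : ℝ) * (k : ℝ)) * c b := by
    intro b
    have hF : (∑ j, if 1 ≤ b j then rr k (b j - 1) * (∑ l, c (up (dn b j) l)) else 0)
        = ∑ j, ∑ l, (if 1 ≤ b j then rr k (b j - 1) * c (up (dn b j) l) else 0) := by
      refine Finset.sum_congr rfl fun j _ => ?_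
      by_cases h : 1 ≤ b j
      · rw [if_pos h, Finset.mul_sum]
        exact Finset.sum_congr rfl fun l _ => (if_pos h).symm
      · rw [if_neg h]
        exact (Finset.sum_eq_zero fun l _ => if_neg h).symm
    have hG : (∑ l, yy k c (up b l))
        = ∑ j, ∑ l, (if 1 ≤ up b l j then rr k (up b l j - 1) * c (dn (up b l) j) else 0) := by
      unfold yy
      exact Finset.sum_comm
    rw [hF, hG, ← Finset.sum_sub_distrib]
    have inner : ∀ j : Fin d,
        ((∑ l, (if 1 ≤ b j then rr k (b j - 1) * c (up (dn b j) l) else 0))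
          - (∑ l, (if 1 ≤ up b l j then rr k (up b l j - 1) * c (dn (up b l) j) else 0)))
        = (2 * (b j : ℝ) - (k:ℝ)) * c b := by
      intro j
      rw [← Finset.sum_sub_distrib]
      rw [Finset.sum_eq_single_of_mem j (Finset.mem_univ j)]
      · -- diagonal term
        have h1 : up b j j = b j + 1 := up_self b j
        rw [h1, if_pos (by omega : 1 ≤ b j + 1), Nat.add_sub_cancel, dn_up]
        have h2 : (if 1 ≤ b j then rr k (b j - 1) * c (up (dn b j) j) else 0)
            = (if 1 ≤ b j then rr k (b j - 1) else 0) * c b := by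
          by_cases h : 1 ≤ b j
          · rw [if_pos h, if_pos h, up_dn h]
          · rw [if_neg h, if_neg h, zero_mul]
        rw [h2, ← sub_mul, rr_diag]
      · -- off-diagonal terms vanish
        intro l _ hlj
        have e1 : up b l j = b j := up_ne b (Ne.symm hlj)
        have e2 : dn (up b l) j = up (dn b j) l := dn_up_comm (Ne.symm hlj) b
        rw [e1, e2]
        exact sub_self _
    rw [Finset.sum_congr rfl fun j _ => inner j, ← Finset.sum_mul]
    congr 1
    rw [Finset.sum_sub_distrib, ← Finset.mul_sum, Finset.sum_const, Finset.card_univ,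
      Fintype.card_fin, nsmul_eq_mul]
  -- the two level sets
  set Tn : Finset (Fin d → ℕ) :=
    (Fintype.piFinset fun _ : Fin d => Finset.range (k+1)).filter (fun b => ∑ j, b j = n) with hTnd
  set Tn1 : Finset (Fin d → ℕ) :=
    (Fintype.piFinset fun _ : Fin d => Finset.range (k+2)).filter (fun b => ∑ j, b j = n+1) with hTn1d
  have mem_Tn : ∀ b : Fin d → ℕ, b ∈ Tn ↔ (∀ j, b j ≤ k) ∧ ∑ j, b j = n := by
    intro b
    simp [hTnd, Fintype.mem_piFinset, Nat.lt_succ_iff]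
  have mem_Tn1 : ∀ b : Fin d → ℕ, b ∈ Tn1 ↔ (∀ j, b j ≤ k + 1) ∧ ∑ j, b j = n + 1 := by
    intro b
    have : ∀ j, (b j < k + 2 ↔ b j ≤ k + 1) := fun j => Nat.lt_succ_iff
    simp [hTn1d, Fintype.mem_piFinset, Nat.lt_succ_iff]
  -- main summed identity
  have main : (∑ b ∈ Tn, WW k b * c b *
        ((∑ j, if 1 ≤ b j then rr k (b j - 1) * (∑ l, c (up (dn b j) l)) else 0)
          - (∑ l, yy k c (up b l))))
      = (2 * (n:ℝ) - (d:ℝ) * (k:ℝ)) * ∑ b ∈ Tn, WW k b * (c b)^2 := by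
    rw [Finset.mul_sum]
    refine Finset.sum_congr rfl fun b hb => ?_
    have hbn : ∑ j, b j = n := ((mem_Tn b).mp hb).2
    rw [point b]
    have hcast : ∑ j, (b j : ℝ) = (n : ℝ) := by
      rw [← Nat.cast_sum, hbn]
    rw [hcast]
    ring
  -- first part vanishes by hstar
  have firstzero : ∀ b ∈ Tn,
      (∑ j, if 1 ≤ b j then rr k (b j - 1) * (∑ l, c (up (dn b j) l)) else 0) = 0 := by
    intro b hb
    apply Finset.sum_eq_zero
    intro j _
    by_cases h1 : 1 ≤ b j
    · rw [if_pos h1, hstar (dn b j) (by rw [sum_dn h1, ((mem_Tn b).mp hb).2]), mul_zero]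
    · rw [if_neg h1]
  -- the reindexing
  have A2 : (∑ b ∈ Tn, WW k b * c b * (∑ l, yy k c (up b l)))
      = ∑ b' ∈ Tn1, WW k b' * yy k c b' * yy k c b' := by
    have lhs1 : (∑ p ∈ Tn ×ˢ (Finset.univ : Finset (Fin d)),
          WW k p.1 * c p.1 * yy k c (up p.1 p.2))
        = ∑ b ∈ Tn, WW k b * c b * (∑ l, yy k c (up b l)) := by
      rw [Finset.sum_product]
      refine Finset.sum_congr rfl fun b _ => ?_
      dsimp only
      exact (Finset.mul_sum _ _ _).symm
    have rhs1 : (∑ p ∈ Tn1 ×ˢ (Finset.univ : Finset (Fin d)),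
          (if 1 ≤ p.1 p.2 then rr k (p.1 p.2 - 1) * c (dn p.1 p.2) else 0)
            * (WW k p.1 * yy k c p.1))
        = ∑ b' ∈ Tn1, WW k b' * yy k c b' * yy k c b' := by
      rw [Finset.sum_product]
      refine Finset.sum_congr rfl fun b' _ => ?_
      dsimp only
      rw [← Finset.sum_mul]
      show yy k c b' * (WW k b' * yy k c b') = _
      ring
    have h0 : ∀ p ∈ Tn1 ×ˢ (Finset.univ : Finset (Fin d)),
        ((if 1 ≤ p.1 p.2 then rr k (p.1 p.2 - 1) * c (dn p.1 p.2) else 0)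
          * (WW k p.1 * yy k c p.1)) ≠ 0 →
        (1 ≤ p.1 p.2 ∧ ∀ m, m ≠ p.2 → p.1 m ≤ k) := by
      rintro ⟨b', j⟩ hp hne
      simp only at hne ⊢
      have hble : ∀ i, b' i ≤ k + 1 :=
        ((mem_Tn1 b').mp (Finset.mem_product.mp hp).1).1
      constructor
      · by_contra h1
        rw [if_neg h1, zero_mul] at hne
        exact hne rfl
      · intro m hmj
        by_contra hmk
        have hm : b' m = k + 1 := by have := hble m; omega
        have hc0 : c (dn b' j) = 0 := hA _ ⟨m, by rw [dn_ne _ hmj]; omega⟩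
        rw [hc0, mul_zero] at hne
        simp at hne
    have rfilter := Finset.sum_filter_of_ne h0
    rw [← lhs1, ← rhs1, ← rfilter]
    refine Finset.sum_bij' (fun p _ => (up p.1 p.2, p.2)) (fun p _ => (dn p.1 p.2, p.2))
      ?_ ?_ ?_ ?_ ?_
    · -- forward membership
      rintro ⟨b, l⟩ hp
      rw [Finset.mem_product] at hp
      obtain ⟨hbk, hbn⟩ := (mem_Tn b).mp hp.1
      simp only [Finset.mem_filter, Finset.mem_product]
      refine ⟨⟨(mem_Tn1 _).mpr ⟨?_, ?_⟩, Finset.mem_univ _⟩, ?_, ?_⟩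
      · intro m
        by_cases hml : m = l
        · subst hml; rw [up_self]; have := hbk m; omega
        · rw [up_ne _ hml]; exact le_trans (hbk m) (by omega)
      · rw [sum_up, hbn]
      · rw [up_self]; omega
      · intro m hml
        rw [up_ne _ hml]; exact hbk m
    · -- backward membership
      rintro ⟨b', j⟩ hp
      simp only [Finset.mem_filter, Finset.mem_product] at hp
      obtain ⟨⟨hb', -⟩, h1, hk'⟩ := hp
      obtain ⟨hble, hbsum⟩ := (mem_Tn1 b').mp hb'
      simp only [Finset.mem_product]
      refine ⟨(mem_Tn _).mpr ⟨?_, ?_⟩, Finset.mem_univ _⟩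
      · intro m
        by_cases hmj : m = j
        · subst hmj; rw [dn_self]; have h1' := hble m; have h2' := hk'; omega
        · rw [dn_ne _ hmj]; exact hk' m hmj
      · have hsd := sum_dn (b := b') (j := j) h1
        omega
    · -- left inverse
      rintro ⟨b, l⟩ hp
      simp only
      rw [dn_up]
    · -- right inverse
      rintro ⟨b', j⟩ hp
      simp only [Finset.mem_filter] at hp
      simp only
      rw [up_dn hp.2.1]
    · -- term equality
      rintro ⟨b, l⟩ hp
      rw [Finset.mem_product] at hp
      obtain ⟨hbk, hbn⟩ := (mem_Tn b).mp hp.1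
      simp only
      rw [up_self, if_pos (by omega : 1 ≤ b l + 1), Nat.add_sub_cancel, dn_up]
      by_cases hl : b l < k
      · rw [show rr k (b l) * c b * (WW k (up b l) * yy k c (up b l))
            = (rr k (b l) * WW k (up b l)) * c b * yy k c (up b l) from by ring,
          WW_up hl]
      · have hbl : b l = k := by have := hbk l; omega
        have hy0 : yy k c (up b l) = 0 := by
          apply hyzero
          · intro m
            by_cases hml : m = l
            · subst hml; rw [up_self]; omega
            · rw [up_ne _ hml]; exact le_trans (hbk m) (by omega)
          · exact ⟨l, by rw [up_self]; omega⟩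
        rw [hy0]
        ring
  -- positivity of Ψ
  have hΨ : 0 ≤ ∑ b' ∈ Tn1, WW k b' * yy k c b' * yy k c b' := by
    apply Finset.sum_nonneg
    intro b' hb'
    obtain ⟨hble, _⟩ := (mem_Tn1 b').mp hb'
    by_cases hbk : ∀ m, b' m ≤ k
    · have : (0:ℝ) ≤ WW k b' := le_of_lt (WW_pos hbk)
      calc (0:ℝ) ≤ WW k b' * (yy k c b' * yy k c b') :=
            mul_nonneg this (mul_self_nonneg _)
        _ = WW k b' * yy k c b' * yy k c b' := by ring
    · push_neg at hbk
      obtain ⟨m, hm⟩ := hbk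
      have : yy k c b' = 0 := hyzero b' hble ⟨m, by have := hble m; omega⟩
      simp [this]
  -- S nonneg
  have hS : 0 ≤ ∑ b ∈ Tn, WW k b * (c b)^2 := by
    apply Finset.sum_nonneg
    intro b hb
    exact mul_nonneg (le_of_lt (WW_pos ((mem_Tn b).mp hb).1)) (sq_nonneg _)
  -- combine
  have key : (2 * (n:ℝ) - (d:ℝ) * (k:ℝ)) * (∑ b ∈ Tn, WW k b * (c b)^2)
      = - ∑ b' ∈ Tn1, WW k b' * yy k c b' * yy k c b' := by
    rw [← main, ← A2, ← Finset.sum_neg_distrib]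
    refine Finset.sum_congr rfl fun b hb => ?_
    rw [firstzero b hb]
    ring
  have hpos : (0:ℝ) < 2 * (n:ℝ) - (d:ℝ) * (k:ℝ) := by
    have : ((d * k : ℕ) : ℝ) < ((2 * n : ℕ) : ℝ) := by exact_mod_cast hn
    push_cast at this
    linarith
  have hSzero : (∑ b ∈ Tn, WW k b * (c b)^2) = 0 := by
    nlinarith
  have hb₀mem : b₀ ∈ Tn := (mem_Tn b₀).mpr ⟨hb₀k, hb₀n⟩
  have hterm : WW k b₀ * (c b₀)^2 = 0 := by
    have := (Finset.sum_eq_zero_iff_of_nonneg (fun b hb =>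
      mul_nonneg (le_of_lt (WW_pos ((mem_Tn b).mp hb).1)) (sq_nonneg _))).mp hSzero b₀ hb₀mem
    exact this
  have hW : WW k b₀ ≠ 0 := ne_of_gt (WW_pos hb₀k)
  have : (c b₀)^2 = 0 := by
    rcases mul_eq_zero.mp hterm with h | h
    · exact absurd h hW
    · exact h
  exact pow_eq_zero_iff (by norm_num) |>.mp this

lemma vanish (d k : ℕ) (c : (Fin d → ℕ) → ℝ)
    (hA : ∀ a : Fin d → ℕ, (∃ j, k + 1 ≤ a j) → c a = 0)
    (hrel : ∀ a : Fin d → ℕ,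
      (∑ S : Finset (Fin d), c (fun j => a j + if j ∈ S then 1 else 0)) = c a) :
    ∀ (m : ℕ) (a : Fin d → ℕ), d * k < 2 * (∑ j, a j) → d * k + 1 ≤ (∑ j, a j) + m →
      c a = 0 := by
  classical
  intro m
  induction m with
  | zero =>
    intro a _ h2
    apply hA
    by_contra hno
    push_neg at hno
    have hle : ∑ j, a j ≤ d * k := by
      calc ∑ j, a j ≤ ∑ _j : Fin d, k :=
            Finset.sum_le_sum fun j _ => by have := hno j; omega
        _ = d * k := by
            rw [Finset.sum_const, Finset.card_univ, Fintype.card_fin, smul_eq_mul]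
    omega
  | succ m ih =>
    intro a h1 h2
    by_cases hcase : d * k + 1 ≤ (∑ j, a j) + m
    · exact ih a h1 hcase
    · -- here ∑ a + m = d * k exactly
      by_cases hak : ∃ j, k + 1 ≤ a j
      · exact hA a hak
      · push_neg at hak
        refine core d k (∑ j, a j) c hA h1 ?_ a rfl (fun j => by have := hak j; omega)
        -- derive the one-step relation at level (∑ a) - 1
        intro a' ha'
        have hrel' := hrel a'
        -- split the sum over all subsets
        have hsplit : (∑ S : Finset (Fin d), c (fun j => a' j + if j ∈ S then 1 else 0))
            = (∑ S ∈ Finset.univ.filter (fun S : Finset (Fin d) => S.card ≤ 1),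
                c (fun j => a' j + if j ∈ S then 1 else 0))
              + ∑ S ∈ Finset.univ.filter (fun S : Finset (Fin d) => ¬ S.card ≤ 1),
                c (fun j => a' j + if j ∈ S then 1 else 0) :=
          (Finset.sum_filter_add_sum_filter_not _ _ _).symm
        have hbig : ∀ S ∈ Finset.univ.filter (fun S : Finset (Fin d) => ¬ S.card ≤ 1),
            c (fun j => a' j + if j ∈ S then 1 else 0) = 0 := by
          intro S hS
          rw [Finset.mem_filter] at hS
          have hcard : 2 ≤ S.card := by omega
          have hw : (∑ j, (a' j + if j ∈ S then 1 else 0)) = (∑ j, a' j) + S.card := by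
            rw [Finset.sum_add_distrib]
            congr 1
            rw [Finset.sum_ite_mem, Finset.univ_inter, Finset.sum_const, smul_eq_mul, mul_one]
          apply ih
          · rw [hw]; omega
          · rw [hw]; omega
        have hzero2 : (∑ S ∈ Finset.univ.filter (fun S : Finset (Fin d) => ¬ S.card ≤ 1),
            c (fun j => a' j + if j ∈ S then 1 else 0)) = 0 :=
          Finset.sum_eq_zero hbig
        -- the small-cardinality part
        have hfe : Finset.univ.filter (fun S : Finset (Fin d) => S.card ≤ 1)
            = insert (∅ : Finset (Fin d))
                (Finset.univ.filter (fun S : Finset (Fin d) => S.card = 1)) := by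
          ext S
          simp only [Finset.mem_filter, Finset.mem_univ, true_and, Finset.mem_insert]
          constructor
          · intro h
            rcases Nat.le_one_iff_eq_zero_or_eq_one.mp h with h | h
            · exact Or.inl (Finset.card_eq_zero.mp h)
            · exact Or.inr h
          · rintro (rfl | h)
            all_goals simp_all
        have hempty : c (fun j => a' j + if j ∈ (∅ : Finset (Fin d)) then 1 else 0) = c a' := by
          have he : (fun j => a' j + if j ∈ (∅ : Finset (Fin d)) then 1 else 0) = a' := by
            funext j; simp
          rw [he]
        have hsing : (∑ S ∈ Finset.univ.filter (fun S : Finset (Fin d) => S.card = 1),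
              c (fun j => a' j + if j ∈ S then 1 else 0))
            = ∑ l : Fin d, c (up a' l) := by
          have himg : Finset.univ.filter (fun S : Finset (Fin d) => S.card = 1)
              = Finset.univ.image (fun l : Fin d => ({l} : Finset (Fin d))) := by
            ext S
            simp only [Finset.mem_filter, Finset.mem_univ, true_and, Finset.mem_image,
              Finset.card_eq_one]
            constructor
            · rintro ⟨l, h⟩; exact ⟨l, h.symm⟩
            · rintro ⟨l, h⟩; exact ⟨l, h.symm⟩
          rw [himg, Finset.sum_image (fun x _ y _ h => Finset.singleton_injective h)]
          refine Finset.sum_congr rfl fun l _ => ?_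
          congr 1
          funext j
          simp only [Finset.mem_singleton]
          by_cases hj : j = l
          · subst hj; rw [if_pos rfl, up_self]
          · rw [if_neg hj, up_ne _ hj, Nat.add_zero]
        have hnotmem : (∅ : Finset (Fin d)) ∉
            Finset.univ.filter (fun S : Finset (Fin d) => S.card = 1) := by
          simp
        rw [hsplit, hzero2, add_zero, hfe, Finset.sum_insert hnotmem, hempty, hsing] at hrel'
        -- hrel' : c a' + ∑ l, c (up a' l) = c a'
        linarith [hrel']

end VanishingAux

/-- Abstract core of the bound `plov(f) ≤ (k/2+1)d`: if `μ` is a symmetric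
`d`-multilinear form invariant under `g = 1 + N` with `N^(k+1) = 0`, then `μ`
vanishes on any list of vectors consisting of `N^i H` repeated `e_i` times
(for `i = 0,…,k`) whenever `∑ e_i = d` and `∑ i·e_i > dk/2`. -/
theorem vanishing_of_intersection_numbers (V : Type*) [AddCommGroup V] [Module ℝ V]
    (d k : ℕ) (hd : 1 ≤ d) (hk : 1 ≤ k)
    (μ : MultilinearMap ℝ (fun _ : Fin d => V) ℝ)
    (hsymm : ∀ (σ : Equiv.Perm (Fin d)) (v : Fin d → V), μ (v ∘ σ) = μ v)
    (N : Module.End ℝ V) (hN : N ^ (k + 1) = 0)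
    (hinv : ∀ v : Fin d → V, μ (fun j => (1 + N) (v j)) = μ v)
    (H : V) (e : Fin (k + 1) → ℕ)
    (h1 : ∑ i, e i = d)
    (h2 : d * k < 2 * ∑ i : Fin (k + 1), (i : ℕ) * e i)
    (ι : Fin d → Fin (k + 1))
    (hι : ∀ i : Fin (k + 1), (Finset.univ.filter fun j => ι j = i).card = e i) :
    μ (fun j => (N ^ (ι j : ℕ)) H) = 0 := by
  classical
  set c : (Fin d → ℕ) → ℝ := fun a => μ (fun j => (N ^ (a j)) H) with hc
  have hA : ∀ a : Fin d → ℕ, (∃ j, k + 1 ≤ a j) → c a = 0 := by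
    rintro a ⟨j, hj⟩
    apply μ.map_coord_zero j
    have h0 : N ^ (a j) = 0 := pow_eq_zero_of_le hj hN
    rw [h0]
    rfl
  have hrel : ∀ a : Fin d → ℕ,
      (∑ S : Finset (Fin d), c (fun j => a j + if j ∈ S then 1 else 0)) = c a := by
    intro a
    have hadd := μ.map_add_univ (fun j => (N ^ (a j + 1)) H) (fun j => (N ^ (a j)) H)
    have heq : (fun j => (N ^ (a j + 1)) H) + (fun j => (N ^ (a j)) H)
        = fun j => (1 + N) ((N ^ (a j)) H) := by
      funext j
      show (N ^ (a j + 1)) H + (N ^ (a j)) H = (1 + N) ((N ^ (a j)) H)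
      rw [LinearMap.add_apply, Module.End.one_apply, pow_succ' N (a j), Module.End.mul_apply]
      abel
    rw [heq, hinv] at hadd
    calc (∑ S : Finset (Fin d), c (fun j => a j + if j ∈ S then 1 else 0))
        = ∑ S : Finset (Fin d),
            μ (S.piecewise (fun j => (N ^ (a j + 1)) H) (fun j => (N ^ (a j)) H)) := by
          refine Finset.sum_congr rfl fun S _ => ?_
          show μ _ = μ _
          congr 1
          funext j
          by_cases hjS : j ∈ S <;> simp [Finset.piecewise, hjS]
      _ = c a := hadd.symm
  have hcount : (∑ j, ((ι j : ℕ))) = ∑ i : Fin (k + 1), (i : ℕ) * e i := by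
    rw [← Finset.sum_fiberwise_of_maps_to' (fun j _ => Finset.mem_univ (ι j))
      (fun i : Fin (k+1) => (i : ℕ))]
    refine Finset.sum_congr rfl fun i _ => ?_
    rw [Finset.sum_const, hι i, smul_eq_mul, mul_comm]
  have key := VanishingAux.vanish d k c hA hrel (d * k + 1) (fun j => (ι j : ℕ))
    (by rw [hcount]; exact h2) (by omega)
  exact key
end

section
/- Let V be a real vector space, μ : V^d → ℝ a symmetric d-multilinear form invariant under a linear map g = id + N with N^{k+1} = 0 (i.e., μ(g v_1,...,g v_d) = μ(v_1,...,v_d) for all v_i), and H ∈ V. Then the function n ↦ μ(Δ_n, ..., Δ_n) (with Δ_n in all d slots), where Δ_n = Σ_{i=0}^{k} C(n, i+1) N^i H, is a polynomial function of n of degree at most (k/2 + 1)·d, where here C(n,i+1) denotes the polynomial binomial coefficient n(n−1)⋯(n−i)/(i+1)!. -/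
open Finset

namespace PlovAux

variable {d k : ℕ}

def ee (j : Fin d) : Fin d → ℕ := fun l => if l = j then 1 else 0

def Fop (c : (Fin d → ℕ) → ℝ) : (Fin d → ℕ) → ℝ :=
  fun a => ∑ j : Fin d, c (a + ee j)

def Eop (k : ℕ) (c : (Fin d → ℕ) → ℝ) : (Fin d → ℕ) → ℝ :=
  fun a => ∑ j : Fin d, (a j : ℝ) * ((k : ℝ) + 1 - (a j : ℝ)) * c (a - ee j)

lemma comm_id (c : (Fin d → ℕ) → ℝ) (a : Fin d → ℕ) :
    Fop (Eop k c) a = Eop k (Fop c) a + ((d * k : ℝ) - 2 * ∑ j, (a j : ℝ)) * c a := by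
  have hidx : ∀ j l : Fin d, l ≠ j → a + ee j - ee l = a - ee l + ee j := by
    intro j l hlj; funext m; simp only [ee, Pi.add_apply, Pi.sub_apply]
    by_cases h1 : m = j <;> by_cases h2 : m = l
    · exact absurd (h2.symm.trans h1) hlj
    all_goals simp [h1, h2, Ne.symm hlj, hlj]
  have hjj : ∀ j : Fin d, a + ee j - ee j = a := by
    intro j; funext m; simp only [ee, Pi.add_apply, Pi.sub_apply]
    by_cases h1 : m = j <;> simp [h1]
  have h1 : Fop (Eop k c) a
      = ∑ j : Fin d, (((a j : ℝ) + 1) * ((k : ℝ) - (a j : ℝ)) * c a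
          + ∑ l ∈ Finset.univ.erase j,
              (a l : ℝ) * ((k : ℝ) + 1 - (a l : ℝ)) * c (a - ee l + ee j)) := by
    unfold Fop Eop
    refine Finset.sum_congr rfl fun j _ => ?_
    rw [← Finset.add_sum_erase _ _ (Finset.mem_univ j)]
    congr 1
    · rw [hjj]
      have hv : (a + ee j) j = a j + 1 := by simp [ee]
      rw [hv]; push_cast; ring
    · refine Finset.sum_congr rfl fun l hl => ?_
      have hlj : l ≠ j := (Finset.mem_erase.mp hl).1
      have hv : (a + ee j) l = a l := by simp [ee, hlj]
      rw [hv, hidx j l hlj]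
  have hdiag : ∀ j : Fin d, (a j : ℝ) * ((k : ℝ) + 1 - (a j : ℝ)) * c (a - ee j + ee j)
      = (a j : ℝ) * ((k : ℝ) + 1 - (a j : ℝ)) * c a := by
    intro j
    rcases Nat.eq_zero_or_pos (a j) with h | h
    · simp [h]
    · have hv : a - ee j + ee j = a := by
        funext m; simp only [ee, Pi.add_apply, Pi.sub_apply]
        by_cases h1 : m = j
        · subst h1; simp; omega
        · simp [h1]
      rw [hv]
  have h2 : Eop k (Fop c) a
      = ∑ j : Fin d, ((a j : ℝ) * ((k : ℝ) + 1 - (a j : ℝ)) * c a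
          + ∑ l ∈ Finset.univ.erase j,
              (a l : ℝ) * ((k : ℝ) + 1 - (a l : ℝ)) * c (a - ee l + ee j)) := by
    unfold Eop Fop
    simp only [Finset.mul_sum]
    rw [Finset.sum_comm]
    refine Finset.sum_congr rfl fun j _ => ?_
    rw [← Finset.add_sum_erase _ _ (Finset.mem_univ j), hdiag j]
  have hAC : ∑ j : Fin d, ((((a j : ℝ) + 1) * ((k : ℝ) - (a j : ℝ)) * c a
          + ∑ l ∈ Finset.univ.erase j,
              (a l : ℝ) * ((k : ℝ) + 1 - (a l : ℝ)) * c (a - ee l + ee j))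
        - ((a j : ℝ) * ((k : ℝ) + 1 - (a j : ℝ)) * c a
          + ∑ l ∈ Finset.univ.erase j,
              (a l : ℝ) * ((k : ℝ) + 1 - (a l : ℝ)) * c (a - ee l + ee j)))
      = ((d * k : ℝ) - 2 * ∑ j, (a j : ℝ)) * c a := by
    have hterm : ∀ j : Fin d, (((a j : ℝ) + 1) * ((k : ℝ) - (a j : ℝ)) * c a
          + ∑ l ∈ Finset.univ.erase j,
              (a l : ℝ) * ((k : ℝ) + 1 - (a l : ℝ)) * c (a - ee l + ee j))
        - ((a j : ℝ) * ((k : ℝ) + 1 - (a j : ℝ)) * c a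
          + ∑ l ∈ Finset.univ.erase j,
              (a l : ℝ) * ((k : ℝ) + 1 - (a l : ℝ)) * c (a - ee l + ee j))
        = ((k : ℝ) - 2 * (a j : ℝ)) * c a := fun j => by ring
    rw [Finset.sum_congr rfl fun j _ => hterm j, ← Finset.sum_mul]
    congr 1
    rw [Finset.sum_sub_distrib, Finset.sum_const, ← Finset.mul_sum]
    simp [Finset.card_univ, nsmul_eq_mul]
  rw [h1, h2]
  rw [Finset.sum_sub_distrib] at hAC
  linarith [hAC]


lemma Eop_zero (a : Fin d → ℕ) : Eop k (fun _ => (0:ℝ)) a = 0 := by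
  simp [Eop]

lemma Eop_smul (r : ℝ) (v : (Fin d → ℕ) → ℝ) (a : Fin d → ℕ) :
    Eop k (fun b => r * v b) a = r * Eop k v a := by
  simp only [Eop, Finset.mul_sum]
  exact Finset.sum_congr rfl fun j _ => by ring

lemma Fop_zero (a : Fin d → ℕ) : Fop (fun _ => (0:ℝ)) a = 0 := by
  simp [Fop]

lemma Eop_support {c : (Fin d → ℕ) → ℝ} {s : ℕ}
    (hsupp : ∀ a, c a ≠ 0 → (∑ j, a j) = s ∧ ∀ j, a j ≤ k) :
    ∀ a, Eop k c a ≠ 0 → (∑ j, a j) = s + 1 ∧ ∀ j, a j ≤ k := by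
  intro a ha
  simp only [Eop] at ha
  obtain ⟨j, -, hj⟩ := Finset.exists_ne_zero_of_sum_ne_zero ha
  have haj : a j ≠ 0 := by
    intro h; rw [h] at hj; simp at hj
  have hajk : a j ≠ k + 1 := by
    intro h
    apply hj
    rw [h]; push_cast; ring
  have hc : c (a - ee j) ≠ 0 := by
    intro h; rw [h] at hj; simp at hj
  obtain ⟨hlev, hbox⟩ := hsupp _ hc
  have heq : ∀ l ∈ Finset.univ.erase j, (a - ee j) l = a l := by
    intro l hl
    have : l ≠ j := (Finset.mem_erase.mp hl).1
    simp [ee, this]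
  have hj2 : (a - ee j) j = a j - 1 := by simp [ee]
  have hsum1 : ∑ l, (a - ee j) l = (a - ee j) j + ∑ l ∈ Finset.univ.erase j, a l := by
    rw [← Finset.add_sum_erase _ _ (Finset.mem_univ j)]
    exact congrArg _ (Finset.sum_congr rfl heq)
  have hsum2 : ∑ l, a l = a j + ∑ l ∈ Finset.univ.erase j, a l :=
    (Finset.add_sum_erase _ _ (Finset.mem_univ j)).symm
  constructor
  · rw [hsum2]; rw [hsum1, hj2] at hlev; omega
  · intro l
    by_cases hlj : l = j
    · subst hlj
      have := hbox l; rw [hj2] at this; omega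
    · have := hbox l
      rw [heq l (Finset.mem_erase.mpr ⟨hlj, Finset.mem_univ l⟩)] at this
      exact this

lemma slice_zero {s : ℕ} (hs : d * k < 2 * s) {c : (Fin d → ℕ) → ℝ}
    (hsupp : ∀ a, c a ≠ 0 → (∑ j, a j) = s ∧ ∀ j, a j ≤ k)
    (hF : ∀ a, Fop c a = 0) : ∀ a, c a = 0 := by
  classical
  -- weight is negative
  have hw : (d * k : ℝ) - 2 * s ≤ -1 := by
    have : (d * k : ℕ) + 1 ≤ 2 * s := hs
    have := Nat.cast_le (α := ℝ).mpr this
    push_cast at this; linarith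
  -- iterated raising
  have husupp : ∀ m a, (Eop k)^[m] c a ≠ 0 → (∑ j, a j) = s + m ∧ ∀ j, a j ≤ k := by
    intro m
    induction m with
    | zero => simpa using hsupp
    | succ m ih =>
      intro a ha
      rw [Function.iterate_succ_apply'] at ha
      have := Eop_support (c := (Eop k)^[m] c) (s := s + m) ih a ha
      rwa [add_assoc] at this
  have hFu : ∀ m a, Fop ((Eop k)^[m+1] c) a
      = ((m:ℝ) + 1) * ((d * k : ℝ) - 2 * s - (m + 1) + 1) * (Eop k)^[m] c a := by
    intro m
    induction m with
    | zero =>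
      intro a
      rw [Function.iterate_succ_apply', Function.iterate_zero_apply]
      rw [comm_id]
      have h0 : Fop c = fun _ => (0:ℝ) := funext hF
      rw [h0, Eop_zero]
      rcases eq_or_ne (c a) 0 with h | h
      · rw [h]; ring
      · obtain ⟨hl, -⟩ := hsupp a h
        have hlr : ∑ j, (a j : ℝ) = s := by
          rw [← Nat.cast_sum, hl]
        rw [hlr]; ring
    | succ m ih =>
      intro a
      rw [Function.iterate_succ_apply']
      rw [comm_id]
      have h0 : Fop ((Eop k)^[m+1] c)
          = fun b => ((m:ℝ) + 1) * ((d * k : ℝ) - 2 * s - (m + 1) + 1) * (Eop k)^[m] c b :=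
        funext (ih)
      rw [h0, Eop_smul]
      rw [← Function.iterate_succ_apply' (Eop k) m c]
      rcases eq_or_ne ((Eop k)^[m+1] c a) 0 with h | h
      · rw [h]; ring
      · obtain ⟨hl, -⟩ := husupp (m+1) a h
        have hlr : ∑ j, (a j : ℝ) = (s : ℝ) + (m + 1) := by
          rw [← Nat.cast_sum, hl]; push_cast; ring
        rw [hlr]; push_cast; ring
  -- top vanishing
  have htop : (Eop k)^[d*k+1] c = fun _ => (0:ℝ) := by
    funext a
    by_contra h
    obtain ⟨hlev, hbox⟩ := husupp (d*k+1) a h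
    have : (∑ j, a j) ≤ d * k := by
      calc (∑ j, a j) ≤ (Finset.univ : Finset (Fin d)).card • k :=
            Finset.sum_le_card_nsmul _ _ _ (fun x _ => hbox x)
        _ = d * k := by simp [Finset.card_univ, smul_eq_mul]
    omega
  -- descend
  have hdesc : ∀ m, (Eop k)^[m+1] c = (fun _ => (0:ℝ)) → (Eop k)^[m] c = fun _ => (0:ℝ) := by
    intro m h
    funext a
    have h1 := hFu m a
    rw [h, Fop_zero] at h1
    have hcoef : ((m:ℝ) + 1) * ((d * k : ℝ) - 2 * s - (m + 1) + 1) ≠ 0 := by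
      apply mul_ne_zero
      · positivity
      · have : (d * k : ℝ) - 2 * s - (m + 1) + 1 ≤ -1 - m := by push_cast; linarith
        intro hc; rw [hc] at this
        have : (0:ℝ) ≤ -1 - m := this
        have hm : (0:ℝ) ≤ m := Nat.cast_nonneg m
        linarith
    exact (mul_eq_zero.mp h1.symm).resolve_left hcoef
  have hiter : ∀ t, (Eop k)^[d*k+1-t] c = fun _ => (0:ℝ) := by
    intro t
    induction t with
    | zero => exact htop
    | succ t ih =>
      rcases le_or_gt (d*k+1) t with h | h
      · have h1 : d*k+1 - (t+1) = 0 := by omega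
        have h0 : d*k+1 - t = 0 := by omega
        rw [h1, ← h0]; exact ih
      · have h1 : d*k+1 - t = (d*k+1 - (t+1)) + 1 := by omega
        apply hdesc
        rw [← h1]; exact ih
  have := hiter (d*k+1)
  simp only [Nat.sub_self, Function.iterate_zero_apply] at this
  intro a; rw [this]


lemma level_big {c : (Fin d → ℕ) → ℝ}
    (hbox : ∀ i : Fin d → ℕ, (∃ j, k < i j) → c i = 0) :
    ∀ i : Fin d → ℕ, d * k < ∑ j, i j → c i = 0 := by
  intro i hi
  apply hbox
  by_contra hcon
  push_neg at hcon
  have : (∑ j, i j) ≤ d * k := by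
    calc (∑ j, i j) ≤ (Finset.univ : Finset (Fin d)).card • k :=
          Finset.sum_le_card_nsmul _ _ _ (fun x _ => hcon x)
      _ = d * k := by simp [Finset.card_univ, smul_eq_mul]
  omega

lemma sum_ee (j : Fin d) : (∑ l, ee j l) = 1 := by
  simp [ee]

lemma sum_indicator (S : Finset (Fin d)) :
    (∑ l, (if l ∈ S then 1 else 0)) = S.card := by
  simp [Finset.sum_ite_mem]

lemma core (c : (Fin d → ℕ) → ℝ)
    (hbox : ∀ i : Fin d → ℕ, (∃ j, k < i j) → c i = 0)
    (hrel : ∀ a : Fin d → ℕ,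
      (∑ S : Finset (Fin d), c (a + fun j => if j ∈ S then 1 else 0)) = c a) :
    ∀ i : Fin d → ℕ, d * k < 2 * (∑ j, i j) → c i = 0 := by
  classical
  suffices h : ∀ t s, d * k + 1 ≤ s + t → d * k < 2 * s →
      ∀ i : Fin d → ℕ, (∑ j, i j) = s → c i = 0 by
    intro i hi
    exact h (d*k+1) (∑ j, i j) (by omega) hi i rfl
  intro t
  induction t with
  | zero =>
    intro s hst hs i hi
    exact level_big hbox i (by omega)
  | succ t ih =>
    intro s hst hs i hi
    rcases le_or_gt (d*k+1) s with hbig | hsmall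
    · exact level_big hbox i (by omega)
    have hs1 : 1 ≤ s := by omega
    have IH' : ∀ i' : Fin d → ℕ, s < (∑ j, i' j) → c i' = 0 := by
      intro i' hi'
      exact ih (∑ j, i' j) (by omega) (by omega) i' rfl
    set cs : (Fin d → ℕ) → ℝ := fun a => if (∑ j, a j) = s then c a else 0 with hcs
    have hsupp : ∀ a, cs a ≠ 0 → (∑ j, a j) = s ∧ ∀ j, a j ≤ k := by
      intro a ha
      by_cases hl : (∑ j, a j) = s
      · refine ⟨hl, fun j => ?_⟩
        by_contra hj
        have h0 : c a = 0 := hbox a ⟨j, by omega⟩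
        rw [hcs] at ha; simp [hl, h0] at ha
      · rw [hcs] at ha; simp [hl] at ha
    have hF : ∀ a, Fop cs a = 0 := by
      intro a
      have hlev : ∀ j : Fin d, (∑ l, (a + ee j) l) = (∑ l, a l) + 1 := by
        intro j
        simp only [Pi.add_apply]
        rw [Finset.sum_add_distrib, sum_ee]
      by_cases hl : (∑ l, a l) = s - 1
      · -- main level: use hrel and IH'
        have hterm : ∀ j : Fin d, cs (a + ee j) = c (a + ee j) := by
          intro j
          rw [hcs]; simp only []
          rw [if_pos (by rw [hlev j, hl]; omega)]
        unfold Fop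
        rw [Finset.sum_congr rfl fun j _ => hterm j]
        -- now show ∑ j, c (a + ee j) = 0
        have hr := hrel a
        have hlevS : ∀ S : Finset (Fin d),
            (∑ l, (a + (fun j => if j ∈ S then 1 else 0) : Fin d → ℕ) l) = (∑ l, a l) + S.card := by
          intro S
          simp only [Pi.add_apply]
          rw [Finset.sum_add_distrib, sum_indicator]
        have hempty : (a + fun j => if j ∈ (∅ : Finset (Fin d)) then 1 else 0) = a := by
          funext l; simp
        have hsplit := Finset.add_sum_erase (Finset.univ : Finset (Finset (Fin d)))
          (fun S => c (a + fun j => if j ∈ S then 1 else 0)) (Finset.mem_univ ∅)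
        rw [← hsplit] at hr
        beta_reduce at hr
        rw [hempty] at hr
        have hr2 : (∑ S ∈ (Finset.univ : Finset (Finset (Fin d))).erase ∅,
            c (a + fun j => if j ∈ S then 1 else 0)) = 0 := by linarith
        rw [← Finset.sum_filter_add_sum_filter_not
          ((Finset.univ : Finset (Finset (Fin d))).erase ∅) (fun S => S.card = 1)] at hr2
        have hbig2 : (∑ S ∈ ((Finset.univ : Finset (Finset (Fin d))).erase ∅).filter
            (fun S => ¬ S.card = 1), c (a + fun j => if j ∈ S then 1 else 0)) = 0 := by
          apply Finset.sum_eq_zero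
          intro S hS
          simp only [Finset.mem_filter, Finset.mem_erase] at hS
          have hc2 : 2 ≤ S.card := by
            rcases hS with ⟨⟨hne, -⟩, hne1⟩
            have : S.card ≠ 0 := fun h => hne (Finset.card_eq_zero.mp h)
            omega
          apply IH'
          rw [hlevS S, hl]
          omega
        have hone : ((Finset.univ : Finset (Finset (Fin d))).erase ∅).filter
            (fun S => S.card = 1) = Finset.univ.image (fun j : Fin d => ({j} : Finset (Fin d))) := by
          ext S
          simp only [Finset.mem_filter, Finset.mem_erase, Finset.mem_univ, true_and, and_true,
            Finset.mem_image]
          constructor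
          · rintro ⟨-, hcard⟩
            obtain ⟨j, rfl⟩ := Finset.card_eq_one.mp hcard
            exact ⟨j, rfl⟩
          · rintro ⟨j, rfl⟩
            exact ⟨Finset.singleton_ne_empty j, Finset.card_singleton j⟩
        rw [hone, Finset.sum_image (fun j _ j' _ h => Finset.singleton_injective h)] at hr2
        have hsingleton : ∀ j : Fin d,
            (a + fun l => if l ∈ ({j} : Finset (Fin d)) then 1 else 0) = a + ee j := by
          intro j; funext l
          simp [ee, Finset.mem_singleton]
        rw [Finset.sum_congr rfl fun j _ => by rw [hsingleton j]] at hr2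
        linarith [hr2, hbig2]
      · -- off level: every term vanishes
        unfold Fop
        apply Finset.sum_eq_zero
        intro j _
        rw [hcs]; simp only []
        rw [if_neg (by rw [hlev j]; omega)]
    have := slice_zero hs hsupp hF i
    rw [hcs] at this
    simpa [hi] using this

end PlovAux

open PlovAux

/-- If `μ` is a symmetric `d`-multilinear form invariant under `g = 1 + N` with
`N^(k+1) = 0` (`k` even), then `n ↦ μ(Δ_n, …, Δ_n)`, where
`Δ_n = ∑_{i=0}^{k} C(n,i+1) • N^i H`, is a polynomial function of `n` of degree
at most `(k/2 + 1)·d`. -/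
theorem plov_degree_bound (V : Type*) [AddCommGroup V] [Module ℝ V]
    (d k : ℕ) (hd : 1 ≤ d) (hk : Even k)
    (μ : MultilinearMap ℝ (fun _ : Fin d => V) ℝ)
    (hsymm : ∀ (σ : Equiv.Perm (Fin d)) (v : Fin d → V), μ (v ∘ σ) = μ v)
    (N : Module.End ℝ V) (hN : N ^ (k + 1) = 0)
    (hinv : ∀ v : Fin d → V, μ (fun j => (1 + N) (v j)) = μ v)
    (H : V) :
    ∃ P : Polynomial ℝ, P.natDegree ≤ (k / 2 + 1) * d ∧
      ∀ n : ℕ,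
        μ (fun _ => ∑ i ∈ Finset.range (k + 1),
            (n.choose (i + 1) : ℝ) • (N ^ i) H) = P.eval (n : ℝ) := by
  classical
  set c : (Fin d → ℕ) → ℝ := fun i => μ (fun j => (N ^ (i j)) H) with hc
  have hbox : ∀ i : Fin d → ℕ, (∃ j, k < i j) → c i = 0 := by
    rintro i ⟨j, hj⟩
    have hz : (N ^ (i j)) H = 0 := by
      have h : i j = (i j - (k+1)) + (k+1) := by omega
      rw [h, pow_add, Module.End.mul_apply, hN]
      simp
    exact μ.map_coord_zero j hz
  have hrel : ∀ a : Fin d → ℕ,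
      (∑ S : Finset (Fin d), c (a + fun j => if j ∈ S then 1 else 0)) = c a := by
    intro a
    have h1 := hinv (fun j => (N ^ (a j)) H)
    have h2 : (fun j => (1 + N) ((N ^ (a j)) H))
        = (fun j => (N ^ (a j + 1)) H) + (fun j => (N ^ (a j)) H) := by
      funext j
      simp only [LinearMap.add_apply, Module.End.one_apply, Pi.add_apply, pow_succ',
        Module.End.mul_apply]
      exact add_comm _ _
    rw [h2, μ.map_add_univ] at h1
    simp only [hc]
    rw [← h1]
    apply Finset.sum_congr rfl
    intro S _
    congr 1
    funext j
    by_cases hj : j ∈ S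
    · simp [Finset.piecewise, hj]
    · simp [Finset.piecewise, hj]
  have hvanish := core c hbox hrel
  -- expansion
  have hexp : ∀ n : ℕ,
      μ (fun _ => ∑ i ∈ Finset.range (k + 1), (n.choose (i + 1) : ℝ) • (N ^ i) H)
        = ∑ r ∈ Fintype.piFinset (fun _ : Fin d => Finset.range (k + 1)),
            (∏ j, (n.choose (r j + 1) : ℝ)) * c r := by
    intro n
    rw [μ.map_sum_finset (fun (_ : Fin d) (i : ℕ) => (n.choose (i + 1) : ℝ) • (N ^ i) H)
      (fun _ => Finset.range (k + 1))]
    apply Finset.sum_congr rfl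
    intro r _
    rw [μ.map_smul_univ (fun j => (n.choose (r j + 1) : ℝ)) (fun j => (N ^ (r j)) H)]
    rw [smul_eq_mul, hc]
  -- polynomial pieces
  set q : ℕ → Polynomial ℝ := fun m => ((m.factorial : ℝ))⁻¹ • descPochhammer ℝ m with hqdef
  have hq_eval : ∀ m n : ℕ, (q m).eval (n : ℝ) = (n.choose m : ℝ) := by
    intro m n
    rw [hqdef]
    simp only [Polynomial.eval_smul, smul_eq_mul, descPochhammer_eval_eq_descFactorial]
    rw [Nat.descFactorial_eq_factorial_mul_choose]
    push_cast
    rw [← mul_assoc, inv_mul_cancel₀ (by exact_mod_cast m.factorial_ne_zero), one_mul]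
  have hq_deg : ∀ m : ℕ, (q m).natDegree ≤ m := by
    intro m
    rw [hqdef]
    refine (Polynomial.natDegree_smul_le _ _).trans ?_
    rw [descPochhammer_natDegree]
  refine ⟨∑ r ∈ Fintype.piFinset (fun _ : Fin d => Finset.range (k + 1)),
      Polynomial.C (c r) * ∏ j, q (r j + 1), ?_, ?_⟩
  · apply Polynomial.natDegree_sum_le_of_forall_le
    intro r _
    rcases eq_or_ne (c r) 0 with h | h
    · rw [h]; simp
    · have hle : 2 * (∑ j, r j) ≤ d * k := by
        by_contra hcon
        exact h (hvanish r (by omega))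
      refine (Polynomial.natDegree_C_mul_le _ _).trans ?_
      refine (Polynomial.natDegree_prod_le _ _).trans ?_
      have hbound : (∑ j : Fin d, (q (r j + 1)).natDegree) ≤ ∑ j : Fin d, (r j + 1) :=
        Finset.sum_le_sum fun j _ => hq_deg (r j + 1)
      refine hbound.trans ?_
      have hsum : (∑ j : Fin d, (r j + 1)) = (∑ j, r j) + d := by
        rw [Finset.sum_add_distrib]
        simp [Finset.card_univ]
      rw [hsum]
      obtain ⟨m, hm⟩ := hk
      have hk2 : k / 2 = m := by omega
      rw [hk2]
      nlinarith [hle, hm]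
  · intro n
    rw [hexp n]
    rw [Polynomial.eval_finset_sum]
    apply Finset.sum_congr rfl
    intro r _
    rw [Polynomial.eval_mul, Polynomial.eval_C, Polynomial.eval_prod]
    rw [Finset.prod_congr rfl fun j _ => hq_eval (r j + 1) n]
    ring
end
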